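/- arXiv:2201.10821 — 12 statements merged into one kernel-verified Lean document; each statement's English description precedes it below -/
import Mathlib

section
/- Subspace property of ensemble Kalman inversion: let u^1,…,u^J ∈ ℝ^{d_u} be an ensemble with mean ū = (1/J)Σ_j u^j, let G : ℝ^{d_u} → ℝ^{d_y}, Ḡ = (1/J)Σ_j G(u^j), and define the sample cross-covariance C^{up} = (1/(J−1))Σ_j (u^j − ū)(G(u^j) − Ḡ)ᵀ and output covariance C^{pp} = (1/(J−1))Σ_j (G(u^j) − Ḡ)(G(u^j) − Ḡ)ᵀ. For y ∈ ℝ^{d_y}, define the updated ensemble u^j_+ = u^j + C^{up}(C^{pp} + I)^{−1}(y − G(u^j)). Then for every j, the updated member u^j_+ lies in the linear span of {u^1, …, u^J}; equivalently, any vector v ∈ ℝ^{d_u} orthogonal to all u^1, …, u^J remains orthogonal to all u^1_+, …, u^J_+. -/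
/-- **Subspace property of ensemble Kalman inversion.**
The updated ensemble members `u⁺ⱼ = uⱼ + C^{up}(C^{pp}+1)⁻¹(y - G(uⱼ))` lie in the linear
span of the original ensemble; equivalently any vector orthogonal to all original members
remains orthogonal to all updated members. -/
theorem eki_subspace_property {du dy J : ℕ}
    (u : Fin J → Fin du → ℝ) (G : (Fin du → ℝ) → Fin dy → ℝ) (y : Fin dy → ℝ)
    (ubar : Fin du → ℝ) (hubar : ubar = (J : ℝ)⁻¹ • ∑ j, u j)
    (Gbar : Fin dy → ℝ) (hGbar : Gbar = (J : ℝ)⁻¹ • ∑ j, G (u j))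
    (Cup : Matrix (Fin du) (Fin dy) ℝ)
    (hCup : Cup = ((J : ℝ) - 1)⁻¹ •
      ∑ j, Matrix.of fun i k => (u j i - ubar i) * (G (u j) k - Gbar k))
    (Cpp : Matrix (Fin dy) (Fin dy) ℝ)
    (hCpp : Cpp = ((J : ℝ) - 1)⁻¹ •
      ∑ j, Matrix.of fun i k => (G (u j) i - Gbar i) * (G (u j) k - Gbar k))
    (uplus : Fin J → Fin du → ℝ)
    (huplus : ∀ j, uplus j = u j + (Cup * (Cpp + 1)⁻¹).mulVec (y - G (u j))) :
    (∀ j, uplus j ∈ Submodule.span ℝ (Set.range u)) ∧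
    (∀ v : Fin du → ℝ, (∀ j, ∑ i, v i * u j i = 0) → ∀ j, ∑ i, v i * uplus j i = 0) := by
  set S := Submodule.span ℝ (Set.range u) with hS
  have hu : ∀ j, u j ∈ S := fun j => Submodule.subset_span ⟨j, rfl⟩
  have hub : ubar ∈ S := by
    rw [hubar]; exact S.smul_mem _ (Submodule.sum_mem _ fun j _ => hu j)
  have hCupv : ∀ w : Fin dy → ℝ, Cup.mulVec w ∈ S := by
    intro w
    have heq : Cup.mulVec w = ((J:ℝ)-1)⁻¹ •
        ∑ j, (∑ k, (G (u j) k - Gbar k) * w k) • (u j - ubar) := by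
      subst hCup
      funext i
      simp only [Matrix.mulVec, dotProduct, Matrix.smul_apply, Matrix.sum_apply,
        Matrix.of_apply, Pi.smul_apply, smul_eq_mul, Finset.sum_apply,
        Pi.sub_apply, Finset.sum_mul, Finset.mul_sum]
      rw [Finset.sum_comm]
      exact Finset.sum_congr rfl fun j _ => Finset.sum_congr rfl fun k _ => by ring
    rw [heq]
    exact S.smul_mem _ (Submodule.sum_mem _ fun j _ =>
      S.smul_mem _ (S.sub_mem (hu j) hub))
  have h1 : ∀ j, uplus j ∈ S := fun j => by
    rw [huplus j, ← Matrix.mulVec_mulVec]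
    exact S.add_mem (hu j) (hCupv _)
  refine ⟨h1, fun v hv j => ?_⟩
  have key : ∀ x ∈ S, ∑ i, v i * x i = 0 := by
    intro x hx
    induction hx using Submodule.span_induction with
    | mem x hx => obtain ⟨j, rfl⟩ := hx; exact hv j
    | zero => simp
    | add x z _ _ hx hz =>
      simp only [Pi.add_apply, mul_add, Finset.sum_add_distrib, hx, hz, add_zero]
    | smul c x _ hx =>
      simp only [Pi.smul_apply, smul_eq_mul, mul_left_comm, ← Finset.mul_sum, hx, mul_zero]
  exact key _ (h1 j)
end

section
/- Observability of linearized localization: let C ∈ ℝ^{d_u × d_u} be symmetric positive semidefinite, let Ψ ∈ ℝ^{d_u × d_u} have nonnegative entries, and let H ∈ ℝ^{d_y × d_u}. Define the localized covariance C̃ = C ∘ Ψ (Schur product), and the cross-covariances C^{up} = C Hᵀ and C̃^{up} = C̃ Hᵀ. Assume: (1) all diagonal entries of HᵀH equal the same value H₀ > 0; (2) there is 0 ≤ h₀ < 1 with Σ_{j ≠ i} |[HᵀH]_{j,i}| < h₀ [HᵀH]_{i,i} for all i; (3) Ψ_{i,i} = 1 and Σ_{j ≠ i} Ψ_{i,j}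 < ψ₀ for all i, with 0 ≤ ψ₀ < 1. Then, letting i* be an index maximizing the diagonal entry C_{i*,i*}, one has Σ_{j=1}^{d_y} C̃^{up}_{i*,j} C^{up}_{i*,j} = [C̃ HᵀH C]_{i*,i*} ≥ H₀ (1 − (h₀ + ψ₀(1 + h₀))) (C_{i*,i*})². -/
open Matrix

/-- **Observability of the linearized localization scheme** (Lemma 4.3 of the paper).
For `C̃ = C ∘ Ψ`, `C^{up} = C Hᵀ`, `C̃^{up} = C̃ Hᵀ`, under diagonal-dominance conditions
on `HᵀH` and `Ψ`, at an index `i*` maximizing the diagonal of `C` one has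
`Σ_j C̃^{up}_{i*,j} C^{up}_{i*,j} = [C̃ HᵀH C]_{i*,i*} ≥ H₀(1 - (h₀ + ψ₀(1+h₀)))(C_{i*,i*})²`. -/
theorem observability_linearized_localization {du dy : ℕ}
    (C Ψ : Matrix (Fin du) (Fin du) ℝ) (H : Matrix (Fin dy) (Fin du) ℝ)
    (hC : C.PosSemidef) (hΨnn : ∀ i j, 0 ≤ Ψ i j)
    (H₀ h₀ ψ₀ : ℝ) (hH₀ : 0 < H₀)
    (hdiag : ∀ i, (Hᵀ * H) i i = H₀)
    (hh₀ : 0 ≤ h₀) (hh₀' : h₀ < 1)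
    (hoff : ∀ i, ∑ j ∈ Finset.univ.erase i, |(Hᵀ * H) j i| < h₀ * (Hᵀ * H) i i)
    (hΨdiag : ∀ i, Ψ i i = 1)
    (hψ₀ : 0 ≤ ψ₀) (hψ₀' : ψ₀ < 1)
    (hΨoff : ∀ i, ∑ j ∈ Finset.univ.erase i, Ψ i j < ψ₀)
    (istar : Fin du) (histar : ∀ i, C i i ≤ C istar istar) :
    (∑ j, (C.hadamard Ψ * Hᵀ) istar j * (C * Hᵀ) istar j
        = (C.hadamard Ψ * Hᵀ * H * C) istar istar) ∧
    H₀ * (1 - (h₀ + ψ₀ * (1 + h₀))) * C istar istar ^ 2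
        ≤ (C.hadamard Ψ * Hᵀ * H * C) istar istar := by
  have hCsym : ∀ j l, C j l = C l j := by
    intro j l
    have := hC.1.apply l j
    simpa using this
  have hAsym : ∀ k l, (Hᵀ * H) k l = (Hᵀ * H) l k := by
    intro k l
    simp [mul_apply, transpose_apply, mul_comm]
  set M := C istar istar with hMdef
  -- nonnegativity of the maximal diagonal entry
  have hM0 : 0 ≤ M := by
    have := hC.dotProduct_mulVec_nonneg (Pi.single istar 1)
    simpa [dotProduct, mulVec, Pi.single_apply] using this
  -- entrywise bound |C istar k| ≤ M
  have quad : ∀ x : Fin du → ℝ, 0 ≤ ∑ j, ∑ l, x j * C j l * x l := by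
    intro x
    have := hC.dotProduct_mulVec_nonneg x
    simpa [dotProduct, mulVec, Finset.mul_sum, mul_assoc, mul_comm, mul_left_comm] using this
  have habs : ∀ k, |C istar k| ≤ M := by
    intro k
    rcases eq_or_ne k istar with rfl | hik
    · rw [abs_of_nonneg hM0]
    have hik' : istar ≠ k := fun h => hik h.symm
    have key : ∀ s : ℝ, 0 ≤ C istar istar + s * C istar k + s * C k istar + s * s * C k k := by
      intro s
      set x : Fin du → ℝ := fun j => if j = istar then 1 else if j = k then s else 0 with hx
      have hval : (∑ j, ∑ l, x j * C j l * x l)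
          = C istar istar + s * C istar k + s * C k istar + s * s * C k k := by
        have h1 : (∑ j, ∑ l, x j * C j l * x l)
            = ∑ j ∈ ({istar, k} : Finset (Fin du)), ∑ l, x j * C j l * x l := by
          refine (Finset.sum_subset (Finset.subset_univ _) ?_).symm
          intro j _ hj
          simp only [Finset.mem_insert, Finset.mem_singleton, not_or] at hj
          have : x j = 0 := by simp [hx, hj.1, hj.2]
          simp [this]
        have h2 : ∀ j, (∑ l, x j * C j l * x l)
            = ∑ l ∈ ({istar, k} : Finset (Fin du)), x j * C j l * x l := by
          intro j
          refine (Finset.sum_subset (Finset.subset_univ _) ?_).symm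
          intro l _ hl
          simp only [Finset.mem_insert, Finset.mem_singleton, not_or] at hl
          have : x l = 0 := by simp [hx, hl.1, hl.2]
          simp [this]
        rw [h1, Finset.sum_pair hik', h2 istar, h2 k,
          Finset.sum_pair hik', Finset.sum_pair hik']
        simp [hx, hik, hik']
        ring
      have := quad x
      rw [hval] at this
      exact this
    have h1 := key 1
    have h2 := key (-1)
    have hsym' := hCsym k istar
    have hkk := histar k
    rw [abs_le]
    constructor <;> nlinarith
  -- rewrite the quadratic form as a double sum
  have hS : (C.hadamard Ψ * Hᵀ * H * C) istar istar
      = ∑ k, ∑ l, (C.hadamard Ψ) istar k * (Hᵀ * H) k l * C istar l := by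
    have h : (C.hadamard Ψ * Hᵀ * H * C) istar istar
        = (C.hadamard Ψ * (Hᵀ * H) * C) istar istar := by
      simp [Matrix.mul_assoc]
    rw [h]
    simp only [mul_apply, Finset.sum_mul]
    rw [Finset.sum_comm]
    refine Finset.sum_congr rfl fun k _ => ?_
    refine Finset.sum_congr rfl fun l _ => ?_
    rw [hCsym l istar]
  -- the first claim
  have heq : (∑ j, (C.hadamard Ψ * Hᵀ) istar j * (C * Hᵀ) istar j
      = (C.hadamard Ψ * Hᵀ * H * C) istar istar) := by
    rw [hS]
    conv_rhs => rw [Finset.sum_comm]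
    simp only [mul_apply, transpose_apply, Finset.sum_mul, Finset.mul_sum]
    rw [Finset.sum_comm]
    refine Finset.sum_congr rfl fun k _ => ?_
    rw [Finset.sum_comm]
    refine Finset.sum_congr rfl fun l _ => ?_
    refine Finset.sum_congr rfl fun j _ => ?_
    ring
  refine ⟨heq, ?_⟩
  rw [hS]
  -- abbreviations
  set A := Hᵀ * H with hAdef
  have hAii : ∀ k, A k k = H₀ := hdiag
  -- row sum bounds for A
  have hArow : ∀ k, ∑ l ∈ Finset.univ.erase k, |A k l| ≤ h₀ * H₀ := by
    intro k
    have : ∑ l ∈ Finset.univ.erase k, |A k l| = ∑ l ∈ Finset.univ.erase k, |A l k| := by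
      refine Finset.sum_congr rfl fun l _ => by rw [hAsym]
    rw [this]
    have := hoff k
    rw [hAii k] at this
    exact le_of_lt this
  have hArowfull : ∀ k, ∑ l, |A k l| ≤ H₀ * (1 + h₀) := by
    intro k
    rw [← Finset.add_sum_erase _ _ (Finset.mem_univ k)]
    have h1 : |A k k| = H₀ := by rw [hAii k, abs_of_pos hH₀]
    rw [h1]
    have := hArow k
    nlinarith
  -- split the double sum
  set f : Fin du → Fin du → ℝ := fun k l => (C.hadamard Ψ) istar k * A k l * C istar l with hf
  have hsplit : (∑ k, ∑ l, f k l)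
      = (∑ l, f istar l) + ∑ k ∈ Finset.univ.erase istar, ∑ l, f k l := by
    rw [← Finset.add_sum_erase _ _ (Finset.mem_univ istar)]
  have hsplit2 : (∑ l, f istar l)
      = f istar istar + ∑ l ∈ Finset.univ.erase istar, f istar l := by
    rw [← Finset.add_sum_erase _ _ (Finset.mem_univ istar)]
  have hfii : f istar istar = H₀ * M ^ 2 := by
    simp [hf, hadamard_apply, hΨdiag, hAii]
    ring
  -- bound T1
  have hCtil : ∀ k, |(C.hadamard Ψ) istar k| ≤ M * Ψ istar k := by
    intro k
    rw [hadamard_apply, abs_mul, abs_of_nonneg (hΨnn istar k)]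
    exact mul_le_mul_of_nonneg_right (habs k) (hΨnn istar k)
  have hT1 : |∑ l ∈ Finset.univ.erase istar, f istar l| ≤ h₀ * H₀ * M ^ 2 := by
    refine le_trans (Finset.abs_sum_le_sum_abs _ _) ?_
    have hb : ∀ l ∈ Finset.univ.erase istar, |f istar l| ≤ M ^ 2 * |A istar l| := by
      intro l _
      simp only [hf, abs_mul]
      have h1 : |(C.hadamard Ψ) istar istar| = M := by
        rw [hadamard_apply, hΨdiag, mul_one, abs_of_nonneg hM0]
      rw [h1]
      have h2 := habs l
      have habsA : (0:ℝ) ≤ |A istar l| := abs_nonneg _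
      calc M * |A istar l| * |C istar l| ≤ M * |A istar l| * M :=
            mul_le_mul_of_nonneg_left h2 (mul_nonneg hM0 habsA)
        _ = M ^ 2 * |A istar l| := by ring
    refine le_trans (Finset.sum_le_sum hb) ?_
    rw [← Finset.mul_sum]
    have := hArow istar
    nlinarith [sq_nonneg M]
  -- bound T2
  have hT2 : |∑ k ∈ Finset.univ.erase istar, ∑ l, f k l| ≤ ψ₀ * (H₀ * (1 + h₀)) * M ^ 2 := by
    refine le_trans (Finset.abs_sum_le_sum_abs _ _) ?_
    have hb : ∀ k ∈ Finset.univ.erase istar,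
        |∑ l, f k l| ≤ Ψ istar k * (H₀ * (1 + h₀)) * M ^ 2 := by
      intro k _
      refine le_trans (Finset.abs_sum_le_sum_abs _ _) ?_
      have hb2 : ∀ l ∈ (Finset.univ : Finset (Fin du)),
          |f k l| ≤ (M * Ψ istar k) * |A k l| * M := by
        intro l _
        simp only [hf, abs_mul]
        have h1 := hCtil k
        have h2 := habs l
        exact mul_le_mul (mul_le_mul_of_nonneg_right h1 (abs_nonneg _)) h2 (abs_nonneg _)
          (mul_nonneg (mul_nonneg hM0 (hΨnn istar k)) (abs_nonneg _))
      refine le_trans (Finset.sum_le_sum hb2) ?_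
      have : (∑ l, (M * Ψ istar k) * |A k l| * M)
          = (M * Ψ istar k) * (∑ l, |A k l|) * M := by
        rw [← Finset.sum_mul, ← Finset.mul_sum]
      rw [this]
      have h3 := hArowfull k
      have h4 := hΨnn istar k
      nlinarith [mul_le_mul_of_nonneg_right (mul_le_mul_of_nonneg_left h3 h4) (sq_nonneg M)]
    refine le_trans (Finset.sum_le_sum hb) ?_
    have : (∑ k ∈ Finset.univ.erase istar, Ψ istar k * (H₀ * (1 + h₀)) * M ^ 2)
        = (∑ k ∈ Finset.univ.erase istar, Ψ istar k) * (H₀ * (1 + h₀)) * M ^ 2 := by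
      rw [Finset.sum_mul, Finset.sum_mul]
    rw [this]
    have h5 := le_of_lt (hΨoff istar)
    have h6 : (0:ℝ) ≤ H₀ * (1 + h₀) := by nlinarith
    nlinarith [mul_le_mul_of_nonneg_right (mul_le_mul_of_nonneg_right h5 h6) (sq_nonneg M)]
  -- combine
  have e1' := (abs_le.mp hT1).1
  have e2' := (abs_le.mp hT2).1
  calc H₀ * (1 - (h₀ + ψ₀ * (1 + h₀))) * M ^ 2
      ≤ f istar istar + (∑ l ∈ Finset.univ.erase istar, f istar l)
        + ∑ k ∈ Finset.univ.erase istar, ∑ l, f k l := by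
        rw [hfii]; nlinarith
    _ = ∑ k, ∑ l, f k l := by rw [hsplit, hsplit2]
end

section
/- Ensemble covariance upper bound (Theorem 4.1 of the paper): fix σ ≥ 0 and c_o > 0. Let C^{uu} : [0,∞) → ℝ^{d_u × d_u} be a continuously differentiable family of symmetric positive semidefinite matrices, and let C^{up}, C̃^{up} : [0,∞) → ℝ^{d_u × d_y} be continuous, such that for every t ≥ 0 and every i, d/dt C^{uu}_{i,i}(t) = −2 Σ_{j=1}^{d_y} C̃^{up}_{i,j}(t) C^{up}_{i,j}(t) + σ/(t+1)². Assume the observability condition: for all t ≥ 0, with i* = i*(t) an index such that C^{uu}_{i*,i*}(t) = ‖C^{uu}(t)‖_max, one has Σ_{j=1}^{d_y} C̃^{up}_{i*,j}(t) C^{up}_{i*,j}(t) ≥ c_o (C^{uu}_{i*,i*}(t))². Then for every δ ∈ (0,1) there exists t₀ ≥ 0 such that for all t ≥ t₀, ‖C^{uu}(t)‖_max ≤ M_C/(1+t), where M_C = (√(1 + 8 c_o σ) + 1)/(4 c_o (1 − δ)). -/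
open Matrix Set Filter Topology

lemma psd_two_abs_le {n : ℕ} {C : Matrix (Fin n) (Fin n) ℝ} (h : C.PosSemidef) (i j : Fin n) :
    2 * |C i j| ≤ C i i + C j j := by
  have hs : C j i = C i j := by simpa using h.1.apply i j
  have h1 := h.dotProduct_mulVec_nonneg (Pi.single i 1 + Pi.single j 1)
  have h2 := h.dotProduct_mulVec_nonneg (Pi.single i 1 + Pi.single j (-1))
  simp [dotProduct_add, add_dotProduct, mulVec_add, mulVec_single, single_dotProduct, hs] at h1 h2
  rcases abs_cases (C i j) with ⟨he, _⟩ | ⟨he, _⟩ <;> rw [he] <;> linarith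

set_option maxHeartbeats 1000000

/-- **Ensemble covariance upper bound** (Theorem 4.1 of the paper).
Under the observability assumption, the diagonal of the ensemble covariance of the localized
EKI decays at least like `M_C/(1+t)`, with `M_C = (√(1+8c_oσ)+1)/(4c_o(1-δ))`.  Since the
matrices are positive semidefinite, the bound on all entries expresses `‖C^{uu}(t)‖_max ≤
M_C/(1+t)`. -/
theorem ensemble_covariance_upper_bound {du dy : ℕ}
    (σ c_o : ℝ) (hσ : 0 ≤ σ) (hc_o : 0 < c_o)
    (Cuu : ℝ → Matrix (Fin du) (Fin du) ℝ)
    (Cup Ctup : ℝ → Matrix (Fin du) (Fin dy) ℝ)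
    (hpsd : ∀ t, 0 ≤ t → (Cuu t).PosSemidef)
    (hCupCont : ContinuousOn Cup (Set.Ici (0 : ℝ)))
    (hCtupCont : ContinuousOn Ctup (Set.Ici (0 : ℝ)))
    (hODE : ∀ t, 0 ≤ t → ∀ i,
      HasDerivAt (fun s => Cuu s i i)
        (-2 * ∑ j, Ctup t i j * Cup t i j + σ / (t + 1) ^ 2) t)
    (hobs : ∀ t, 0 ≤ t → ∀ istar : Fin du,
      (∀ i, Cuu t i i ≤ Cuu t istar istar) →
      c_o * Cuu t istar istar ^ 2 ≤ ∑ j, Ctup t istar j * Cup t istar j)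
    (δ : ℝ) (hδ : 0 < δ) (hδ' : δ < 1)
    (M_C : ℝ) (hM_C : M_C = (Real.sqrt (1 + 8 * c_o * σ) + 1) / (4 * c_o * (1 - δ))) :
    ∃ t₀ : ℝ, 0 ≤ t₀ ∧ ∀ t, t₀ ≤ t → ∀ i j, |Cuu t i j| ≤ M_C / (1 + t) := by
  rcases Nat.eq_zero_or_pos du with hdu | hdu
  · subst hdu
    exact ⟨0, le_refl _, fun t _ i _ => i.elim0⟩
  -- basic constants
  set r : ℝ := Real.sqrt (1 + 8 * c_o * σ) with hr
  have hr1 : (1 : ℝ) ≤ r := Real.one_le_sqrt.2 (by nlinarith)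
  have hr2 : r ^ 2 = 1 + 8 * c_o * σ := Real.sq_sqrt (by nlinarith)
  set Ms : ℝ := (r + 1) / (4 * c_o) with hMs
  have hMs_pos : 1 / (2 * c_o) ≤ Ms := by
    rw [hMs, div_le_div_iff₀ (by positivity) (by positivity)]
    nlinarith
  have hMs0 : 0 < Ms := lt_of_lt_of_le (by positivity) hMs_pos
  have hMsq : 2 * c_o * Ms ^ 2 - Ms - σ = 0 := by
    rw [hMs]; field_simp; nlinarith
  have hMC : M_C = Ms / (1 - δ) := by
    rw [hM_C, hMs, div_div]
  have h1δ : 0 < 1 - δ := by linarith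
  have hMCgt : Ms < M_C := by
    rw [hMC, lt_div_iff₀ h1δ]; nlinarith
  set M' : ℝ := (Ms + M_C) / 2 with hM'
  have hM'1 : Ms < M' := by rw [hM']; linarith
  have hM'2 : M' < M_C := by rw [hM']; linarith
  have hM'0 : 0 < M' := lt_trans hMs0 hM'1
  have h2cMs : 1 ≤ 2 * c_o * Ms := by
    rw [div_le_iff₀ (by positivity)] at hMs_pos
    linarith [hMs_pos]
  have hkey : σ < 2 * c_o * M' ^ 2 - M' := by
    have hpos : 0 < (M' - Ms) * (2 * c_o * (M' + Ms) - 1) :=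
      mul_pos (sub_pos.2 hM'1) (by nlinarith)
    nlinarith [hpos, hMsq]
  -- the max-diagonal function
  have hne : (Finset.univ : Finset (Fin du)).Nonempty := by
    simpa [Finset.univ_nonempty_iff] using Fin.pos_iff_nonempty.mp hdu
  set V : ℝ → ℝ := fun t => Finset.univ.sup' hne (fun i => Cuu t i i) with hV
  have hVle : ∀ t i, Cuu t i i ≤ V t := fun t i =>
    Finset.le_sup' (fun i => Cuu t i i) (Finset.mem_univ i)
  have hVmem : ∀ t, ∃ i, V t = Cuu t i i := fun t => by
    obtain ⟨i, -, hi⟩ := Finset.exists_mem_eq_sup' hne (fun i => Cuu t i i)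
    exact ⟨i, hi⟩
  have hVcont : ContinuousOn V (Ici (0:ℝ)) :=
    ContinuousOn.finset_sup'_apply hne fun i _ => fun t ht =>
      ((hODE t ht i).continuousAt).continuousWithinAt
  -- barrier parameters
  set W : ℝ := max (V 0) M' with hW
  have hW0 : 0 < W := lt_of_lt_of_le hM'0 (le_max_right _ _)
  set s : ℝ := 1 - M' / W with hs
  have hMW : M' / W ≤ 1 := (div_le_one hW0).2 (le_max_right _ _)
  have hMW0 : 0 < M' / W := by positivity
  have hs0 : 0 ≤ s := by rw [hs]; linarith
  have hs1 : 1 - s = M' / W := by rw [hs]; ring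
  have hden : ∀ x : ℝ, 0 ≤ x → 0 < 1 + x - s := fun x hx => by
    have h1 : M' / W ≤ 1 + x - s := by rw [← hs1]; linarith
    linarith [lt_of_lt_of_le hMW0 h1]
  set g : ℝ → ℝ := fun t => M' / (1 + t - s) with hg
  -- main barrier estimate
  have hbar : ∀ t : ℝ, 0 ≤ t → V t ≤ g t := by
    intro b hb
    have := image_le_of_liminf_slope_right_lt_deriv_boundary'
      (f := V) (f' := fun x => σ / (x + 1) ^ 2 - 2 * c_o * (V x) ^ 2)
      (a := 0) (b := b) (B := g) (B' := fun x => -M' / (1 + x - s) ^ 2)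
      (hVcont.mono Icc_subset_Ici_self)
      ?hf' ?ha ?hB ?hB' ?bound (right_mem_Icc.2 hb)
    · exact this
    case hf' =>
      intro x hx q hq
      have hx0 : 0 ≤ x := hx.1
      have hall : ∀ i : Fin du, ∀ᶠ z in 𝓝[>] x, Cuu z i i - V x < q * (z - x) := by
        intro i
        have hd := hODE x hx0 i
        set d : ℝ := -2 * ∑ j, Ctup x i j * Cup x i j + σ / (x + 1) ^ 2 with hdd
        have hslope : Tendsto (slope (fun t => Cuu t i i) x) (𝓝[>] x) (𝓝 d) :=
          (hasDerivAt_iff_tendsto_slope.1 hd).mono_left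
            (nhdsWithin_mono x fun z hz => ne_of_gt hz)
        rcases eq_or_lt_of_le (hVle x i) with heq | hlt
        · -- maximizing index
          have hobs' := hobs x hx0 i (fun i' => heq ▸ hVle x i')
          have hd_lt : d < q := by
            have hco : c_o * (V x) ^ 2 ≤ ∑ j, Ctup x i j * Cup x i j := by
              rw [← heq]; exact hobs'
            have hdle : d ≤ σ / (x + 1) ^ 2 - 2 * c_o * (V x) ^ 2 := by
              rw [hdd]; linarith
            have hq' : σ / (x + 1) ^ 2 - 2 * c_o * V x ^ 2 < q := hq
            exact lt_of_le_of_lt hdle hq'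
          filter_upwards [hslope.eventually_lt_const hd_lt, self_mem_nhdsWithin] with z hz hz'
          have hzx : 0 < z - x := sub_pos.2 hz'
          rw [slope_def_field, div_lt_iff₀ hzx] at hz
          rw [← heq]
          linarith
        · -- non-maximizing index
          have hε : 0 < V x - Cuu x i i := sub_pos.2 hlt
          have hsub : Tendsto (fun z : ℝ => z - x) (𝓝[>] x) (𝓝[>] 0) := by
            apply tendsto_nhdsWithin_of_tendsto_nhds_of_eventually_within
            · have h0 : Tendsto (fun z : ℝ => z - x) (𝓝 x) (𝓝 (x - x)) :=
                (tendsto_id).sub_const x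
              simpa using h0.mono_left nhdsWithin_le_nhds
            · filter_upwards [self_mem_nhdsWithin] with z hz
              exact sub_pos.2 (mem_Ioi.1 hz)
          have htop : Tendsto (fun z : ℝ => (V x - Cuu x i i) / (z - x)) (𝓝[>] x) atTop := by
            have := (tendsto_inv_nhdsGT_zero.comp hsub).const_mul_atTop hε
            simpa [div_eq_mul_inv, Function.comp] using this
          have hev1 := hslope.eventually_lt_const (lt_add_one d)
          have hev2 := htop.eventually (eventually_gt_atTop (d + 1 - q))
          filter_upwards [hev1, hev2, self_mem_nhdsWithin] with z hz1 hz2 hz'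
          have hzx : 0 < z - x := sub_pos.2 hz'
          rw [slope_def_field, div_lt_iff₀ hzx] at hz1
          rw [lt_div_iff₀ hzx] at hz2
          linarith
      have hev : ∀ᶠ z in 𝓝[>] x, ∀ i : Fin du, Cuu z i i - V x < q * (z - x) :=
        eventually_all.2 hall
      apply Eventually.frequently
      filter_upwards [hev, self_mem_nhdsWithin] with z hz hz'
      have hzx : 0 < z - x := sub_pos.2 hz'
      obtain ⟨iz, hiz⟩ := hVmem z
      rw [slope_def_field, div_lt_iff₀ hzx, hiz]
      linarith [hz iz]
    case ha =>
      have hgw : g 0 = W := by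
        rw [hg]
        simp only
        rw [show (1:ℝ) + 0 - s = M' / W by rw [← hs1]; ring,
          div_div_eq_mul_div, mul_comm, mul_div_assoc, div_self (ne_of_gt hM'0), mul_one]
      rw [hgw]
      exact le_max_left _ _
    case hB =>
      intro x hx
      exact (ContinuousAt.continuousWithinAt (by
        apply ContinuousAt.div continuousAt_const (by fun_prop)
        exact ne_of_gt (hden x hx.1)))
    case hB' =>
      intro x hx
      have h1 : HasDerivAt (fun t : ℝ => 1 + t - s) 1 x := by
        simpa using ((hasDerivAt_id x).const_add 1).sub_const s
      have h2 := (h1.inv (ne_of_gt (hden x hx.1))).const_mul M'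
      have h3 : HasDerivAt g (-M' / (1 + x - s) ^ 2) x := by
        have e : -M' / (1 + x - s) ^ 2 = M' * (-1 / (1 + x - s) ^ 2) := by ring
        rw [hg, e]
        simpa [div_eq_mul_inv] using h2
      exact h3.hasDerivWithinAt
    case bound =>
      intro x hx hVg
      have hx0 : 0 ≤ x := hx.1
      have hp : 0 < 1 + x - s := hden x hx0
      have hpq : 1 + x - s ≤ x + 1 := by linarith
      have hVx : V x = M' / (1 + x - s) := hVg
      have hA : σ / (x + 1) ^ 2 ≤ σ / (1 + x - s) ^ 2 := by
        apply div_le_div_of_nonneg_left hσ (by positivity)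
        nlinarith
      have hB2 : (σ - 2 * c_o * M' ^ 2) / (1 + x - s) ^ 2 < -M' / (1 + x - s) ^ 2 := by
        apply div_lt_div_of_pos_right (by linarith) (by positivity)
      have hVsq : (V x) ^ 2 = M' ^ 2 / (1 + x - s) ^ 2 := by
        rw [hVx, div_pow]
      show σ / (x + 1) ^ 2 - 2 * c_o * V x ^ 2 < -M' / (1 + x - s) ^ 2
      rw [hVsq]
      calc σ / (x + 1) ^ 2 - 2 * c_o * (M' ^ 2 / (1 + x - s) ^ 2)
          ≤ σ / (1 + x - s) ^ 2 - 2 * c_o * M' ^ 2 / (1 + x - s) ^ 2 := by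
            rw [mul_div_assoc]; linarith [hA]
        _ = (σ - 2 * c_o * M' ^ 2) / (1 + x - s) ^ 2 := by ring
        _ < -M' / (1 + x - s) ^ 2 := hB2
  -- conclude
  refine ⟨max 0 (M_C * s / (M_C - M') - 1), le_max_left _ _, ?_⟩
  intro t ht i j
  have ht0 : 0 ≤ t := le_trans (le_max_left _ _) ht
  have ht1 : M_C * s / (M_C - M') - 1 ≤ t := le_trans (le_max_right _ _) ht
  have hMCM' : 0 < M_C - M' := by linarith
  have hp : 0 < 1 + t - s := hden t ht0
  have hq : 0 < 1 + t := by linarith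
  have h2 : M' / (1 + t - s) ≤ M_C / (1 + t) := by
    rw [div_le_div_iff₀ hp hq]
    have hts : M_C * s / (M_C - M') ≤ 1 + t := by linarith
    rw [div_le_iff₀ hMCM'] at hts
    nlinarith
  have h3 := le_trans (hbar t ht0) h2
  have h4 := psd_two_abs_le (hpsd t ht0) i j
  have h5 : Cuu t i i ≤ M_C / (1 + t) := le_trans (hVle t i) h3
  have h6 : Cuu t j j ≤ M_C / (1 + t) := le_trans (hVle t j) h3
  linarith
end

section
/- Regularity of centralized localization: let u^1,…,u^J ∈ ℝ^{d_u} be an ensemble with mean ū, let G : ℝ^{d_u} → ℝ^{d_y}, and define the sample covariance C^{uu} and cross-covariance C^{up} as usual. Let i : {1,…,d_y} → {1,…,d_u}, let Ψ ∈ ℝ^{d_u × d_u} have nonnegative entries, and define the centralized localization C̃^{up}_{i,j} = C^{up}_{i,j} Ψ_{i,i(j)}. Suppose each component G_j is component-wise Lipschitz: |G_j(u) − G_j(v)| ≤ Σ_k L_{j,k}|u_k − v_k| for all u, v, with Σ_k L_{j,k} ≤ L for all j. Then for every index i, Σ_{j=1}^{d_y} C̃^{up}_{i,j} C^{up}_{i,j}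 ≤ L_R · C^{uu}_{i,i} · ‖C^{uu}‖_max, where L_R = L² · max_i Σ_{j=1}^{d_y} Ψ_{i,i(j)}. -/
open Matrix

/-- The maximal diagonal entry of a matrix; for a positive semidefinite matrix this equals
`‖C‖_max = max_{i,j}|C_{i,j}|`. -/
noncomputable def maxDiag {n : ℕ} (A : Matrix (Fin n) (Fin n) ℝ) : ℝ := ⨆ i, A i i


lemma sqrt_factor {c A B : ℝ} (hc : 0 ≤ c) :
    c * (Real.sqrt A * Real.sqrt B) = Real.sqrt (c * A) * Real.sqrt (c * B) := by
  rw [Real.sqrt_mul hc, Real.sqrt_mul hc]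
  conv_lhs => rw [← Real.mul_self_sqrt hc]
  ring

lemma pair_expand (J : ℕ) (A B : Fin J → ℝ) :
    ∑ m, ∑ n, (A m - A n) * (B m - B n)
      = 2 * ((J : ℝ) * ∑ m, A m * B m - (∑ m, A m) * (∑ m, B m)) := by
  simp only [sub_mul, mul_sub, Finset.sum_sub_distrib, Finset.sum_const, Finset.card_univ,
    Fintype.card_fin, nsmul_eq_mul, ← Finset.mul_sum, ← Finset.sum_mul]
  ring

lemma centered (J : ℕ) (A B : Fin J → ℝ) :
    ∑ m, (A m - (J : ℝ)⁻¹ * ∑ n, A n) * (B m - (J : ℝ)⁻¹ * ∑ n, B n)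
      = (2 * (J : ℝ))⁻¹ * ∑ m, ∑ n, (A m - A n) * (B m - B n) := by
  rcases Nat.eq_zero_or_pos J with h | h
  · subst h; simp
  · have hJ : (J : ℝ) ≠ 0 := by positivity
    rw [pair_expand]
    simp only [sub_mul, mul_sub, Finset.sum_sub_distrib, Finset.sum_const, Finset.card_univ,
      Fintype.card_fin, nsmul_eq_mul, ← Finset.mul_sum, ← Finset.sum_mul]
    field_simp
    ring

/-- **Regularity of the centralized localization scheme** (Lemma 4.4 of the paper).
If every observation component `G_j` is component-wise Lipschitz with coefficients summing to
at most `L`, then for every index `i`,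
`Σ_j C̃^{up}_{i,j} C^{up}_{i,j} ≤ L_R C^{uu}_{i,i} ‖C^{uu}‖_max`, where
`L_R = L² max_i Σ_j Ψ_{i,i(j)}`. -/
theorem regularity_centralized_localization {du dy J : ℕ}
    (u : Fin J → Fin du → ℝ) (G : (Fin du → ℝ) → Fin dy → ℝ)
    (ubar : Fin du → ℝ) (hubar : ubar = (J : ℝ)⁻¹ • ∑ m, u m)
    (Gbar : Fin dy → ℝ) (hGbar : Gbar = (J : ℝ)⁻¹ • ∑ m, G (u m))
    (Cuu : Matrix (Fin du) (Fin du) ℝ)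
    (hCuu : Cuu = ((J : ℝ) - 1)⁻¹ •
      ∑ m, Matrix.of fun i k => (u m i - ubar i) * (u m k - ubar k))
    (Cup : Matrix (Fin du) (Fin dy) ℝ)
    (hCup : Cup = ((J : ℝ) - 1)⁻¹ •
      ∑ m, Matrix.of fun i k => (u m i - ubar i) * (G (u m) k - Gbar k))
    (center : Fin dy → Fin du)
    (Ψ : Matrix (Fin du) (Fin du) ℝ) (hΨnn : ∀ i j, 0 ≤ Ψ i j)
    (Ctup : Matrix (Fin du) (Fin dy) ℝ)
    (hCtup : ∀ i j, Ctup i j = Cup i j * Ψ i (center j))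
    (Lc : Fin dy → Fin du → ℝ) (L : ℝ)
    (hLip : ∀ j (v w : Fin du → ℝ), |G v j - G w j| ≤ ∑ k, Lc j k * |v k - w k|)
    (hL : ∀ j, ∑ k, Lc j k ≤ L)
    (L_R : ℝ) (hL_R : L_R = L ^ 2 * ⨆ i : Fin du, ∑ j, Ψ i (center j)) :
    ∀ i, ∑ j, Ctup i j * Cup i j ≤ L_R * Cuu i i * maxDiag Cuu := by
  intro i
  set c : ℝ := ((J : ℝ) - 1)⁻¹ * (2 * (J : ℝ))⁻¹ with hc
  have hcnn : 0 ≤ c := by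
    rcases Nat.eq_zero_or_pos J with h | h
    · subst h; simp [hc]
    · have h1 : (0:ℝ) ≤ ((J : ℝ) - 1)⁻¹ := by
        apply inv_nonneg.mpr
        have : (1:ℝ) ≤ (J:ℝ) := by exact_mod_cast h
        linarith
      have h2 : (0:ℝ) ≤ (2 * (J : ℝ))⁻¹ := by positivity
      exact mul_nonneg h1 h2
  have hubar' : ∀ k, ubar k = (J : ℝ)⁻¹ * ∑ m, u m k := by
    intro k; rw [hubar]; simp [Finset.sum_apply]
  have hGbar' : ∀ j, Gbar j = (J : ℝ)⁻¹ * ∑ m, G (u m) j := by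
    intro j; rw [hGbar]; simp [Finset.sum_apply]
  have hCuu' : ∀ k l, Cuu k l = c * ∑ m, ∑ n, (u m k - u n k) * (u m l - u n l) := by
    intro k l
    rw [hCuu]
    simp only [Matrix.smul_apply, Matrix.sum_apply, Matrix.of_apply, smul_eq_mul]
    rw [show (∑ m, (u m k - ubar k) * (u m l - ubar l))
        = ∑ m, (u m k - (J:ℝ)⁻¹ * ∑ n, u n k) * (u m l - (J:ℝ)⁻¹ * ∑ n, u n l) by
      simp [hubar']]
    rw [centered J (fun m => u m k) (fun m => u m l)]
    rw [hc]; ring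
  have hCup' : ∀ j, Cup i j = c * ∑ m, ∑ n, (u m i - u n i) * (G (u m) j - G (u n) j) := by
    intro j
    rw [hCup]
    simp only [Matrix.smul_apply, Matrix.sum_apply, Matrix.of_apply, smul_eq_mul]
    rw [show (∑ m, (u m i - ubar i) * (G (u m) j - Gbar j))
        = ∑ m, (u m i - (J:ℝ)⁻¹ * ∑ n, u n i) * (G (u m) j - (J:ℝ)⁻¹ * ∑ n, G (u n) j) by
      simp [hubar', hGbar']]
    rw [centered J (fun m => u m i) (fun m => G (u m) j)]
    rw [hc]; ring
  have hdiagnn : ∀ k, 0 ≤ Cuu k k := by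
    intro k
    rw [hCuu' k k]
    apply mul_nonneg hcnn
    apply Finset.sum_nonneg; intro m _
    apply Finset.sum_nonneg; intro n _
    exact mul_self_nonneg _
  have hbdd : BddAbove (Set.range fun k => Cuu k k) := (Set.finite_range _).bddAbove
  have hmax : ∀ k, Cuu k k ≤ maxDiag Cuu := fun k => le_ciSup hbdd k
  have hmaxnn : 0 ≤ maxDiag Cuu := le_trans (hdiagnn i) (hmax i)
  have hLcnn : ∀ j k, 0 ≤ Lc j k := by
    intro j k
    have h1 := hLip j (fun _ => 0) ((Pi.single k 1 : Fin du → ℝ))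
    have h2 : (∑ k', Lc j k' * |(fun _ => (0:ℝ)) k' - (Pi.single k 1 : Fin du → ℝ) k'|) = Lc j k := by
      rw [Finset.sum_eq_single k]
      · simp [Pi.single_apply]
      · intro b _ hb; simp [Pi.single_apply, hb]
      · simp
    rw [h2] at h1
    exact le_trans (abs_nonneg _) h1
  set s : ℝ := Real.sqrt (Cuu i i * maxDiag Cuu) with hs
  have hsmul : s * s = Cuu i i * maxDiag Cuu :=
    Real.mul_self_sqrt (mul_nonneg (hdiagnn i) hmaxnn)
  have hssplit : s = Real.sqrt (Cuu i i) * Real.sqrt (maxDiag Cuu) := by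
    rw [hs, Real.sqrt_mul (hdiagnn i)]
  -- Cauchy–Schwarz part
  have step3 : ∀ k : Fin du, c * ∑ m, ∑ n, |u m i - u n i| * |u m k - u n k|
      ≤ Real.sqrt (Cuu i i) * Real.sqrt (Cuu k k) := by
    intro k
    have cs : (∑ p : Fin J × Fin J, |u p.1 i - u p.2 i| * |u p.1 k - u p.2 k|)
        ≤ Real.sqrt (∑ p : Fin J × Fin J, |u p.1 i - u p.2 i| ^ 2)
          * Real.sqrt (∑ p : Fin J × Fin J, |u p.1 k - u p.2 k| ^ 2) :=
      Real.sum_mul_le_sqrt_mul_sqrt _ _ _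
    have e1 : ∀ l : Fin du, (∑ p : Fin J × Fin J, |u p.1 l - u p.2 l| ^ 2)
        = ∑ m, ∑ n, (u m l - u n l) * (u m l - u n l) := by
      intro l
      rw [Fintype.sum_prod_type]
      apply Finset.sum_congr rfl; intro m _
      apply Finset.sum_congr rfl; intro n _
      rw [sq_abs]; ring
    have e2 : (∑ p : Fin J × Fin J, |u p.1 i - u p.2 i| * |u p.1 k - u p.2 k|)
        = ∑ m, ∑ n, |u m i - u n i| * |u m k - u n k| := by
      rw [Fintype.sum_prod_type]
    rw [e1, e1, e2] at cs
    calc c * ∑ m, ∑ n, |u m i - u n i| * |u m k - u n k|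
        ≤ c * (Real.sqrt (∑ m, ∑ n, (u m i - u n i) * (u m i - u n i))
            * Real.sqrt (∑ m, ∑ n, (u m k - u n k) * (u m k - u n k))) :=
          mul_le_mul_of_nonneg_left cs hcnn
      _ = Real.sqrt (c * ∑ m, ∑ n, (u m i - u n i) * (u m i - u n i))
            * Real.sqrt (c * ∑ m, ∑ n, (u m k - u n k) * (u m k - u n k)) := by
          exact sqrt_factor hcnn
      _ = Real.sqrt (Cuu i i) * Real.sqrt (Cuu k k) := by rw [← hCuu', ← hCuu']
  have key : ∀ j, |Cup i j| ≤ L * s := by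
    intro j
    have step1 : |Cup i j| ≤
        c * ∑ m, ∑ n, |u m i - u n i| * ∑ k, Lc j k * |u m k - u n k| := by
      rw [hCup' j, abs_mul, abs_of_nonneg hcnn]
      apply mul_le_mul_of_nonneg_left _ hcnn
      calc |∑ m, ∑ n, (u m i - u n i) * (G (u m) j - G (u n) j)|
          ≤ ∑ m, |∑ n, (u m i - u n i) * (G (u m) j - G (u n) j)| :=
            Finset.abs_sum_le_sum_abs _ _
        _ ≤ ∑ m, ∑ n, |(u m i - u n i) * (G (u m) j - G (u n) j)| :=
            Finset.sum_le_sum fun m _ => Finset.abs_sum_le_sum_abs _ _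
        _ ≤ ∑ m, ∑ n, |u m i - u n i| * ∑ k, Lc j k * |u m k - u n k| := by
            apply Finset.sum_le_sum; intro m _
            apply Finset.sum_le_sum; intro n _
            rw [abs_mul]
            exact mul_le_mul_of_nonneg_left (hLip j (u m) (u n)) (abs_nonneg _)
    have step2 : c * (∑ m, ∑ n, |u m i - u n i| * ∑ k, Lc j k * |u m k - u n k|)
        = ∑ k, Lc j k * (c * ∑ m, ∑ n, |u m i - u n i| * |u m k - u n k|) := by
      have h1 : ∀ m n : Fin J, |u m i - u n i| * ∑ k, Lc j k * |u m k - u n k|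
          = ∑ k, Lc j k * (|u m i - u n i| * |u m k - u n k|) := by
        intro m n; rw [Finset.mul_sum]; apply Finset.sum_congr rfl; intro k _; ring
      simp only [h1]
      rw [show (∑ m, ∑ n, ∑ k, Lc j k * (|u m i - u n i| * |u m k - u n k|))
          = ∑ k, ∑ m, ∑ n, Lc j k * (|u m i - u n i| * |u m k - u n k|) by
        calc (∑ m, ∑ n, ∑ k, Lc j k * (|u m i - u n i| * |u m k - u n k|))
            = ∑ m, ∑ k, ∑ n, Lc j k * (|u m i - u n i| * |u m k - u n k|) :=
              Finset.sum_congr rfl fun m _ => Finset.sum_comm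
          _ = ∑ k, ∑ m, ∑ n, Lc j k * (|u m i - u n i| * |u m k - u n k|) :=
              Finset.sum_comm]
      rw [Finset.mul_sum]
      apply Finset.sum_congr rfl; intro k _
      simp only [← Finset.mul_sum]
      ring
    calc |Cup i j| ≤ c * ∑ m, ∑ n, |u m i - u n i| * ∑ k, Lc j k * |u m k - u n k| := step1
      _ = ∑ k, Lc j k * (c * ∑ m, ∑ n, |u m i - u n i| * |u m k - u n k|) := step2
      _ ≤ ∑ k, Lc j k * (Real.sqrt (Cuu i i) * Real.sqrt (maxDiag Cuu)) := by
          apply Finset.sum_le_sum; intro k _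
          apply mul_le_mul_of_nonneg_left _ (hLcnn j k)
          exact le_trans (step3 k)
            (mul_le_mul_of_nonneg_left (Real.sqrt_le_sqrt (hmax k)) (Real.sqrt_nonneg _))
      _ = (∑ k, Lc j k) * s := by rw [← Finset.sum_mul, hssplit]
      _ ≤ L * s := mul_le_mul_of_nonneg_right (hL j) (Real.sqrt_nonneg _)
  -- final chain
  calc ∑ j, Ctup i j * Cup i j
      = ∑ j, Ψ i (center j) * (Cup i j * Cup i j) := by
        apply Finset.sum_congr rfl; intro j _; rw [hCtup]; ring
    _ ≤ ∑ j, Ψ i (center j) * ((L * s) * (L * s)) := by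
        apply Finset.sum_le_sum; intro j _
        apply mul_le_mul_of_nonneg_left _ (hΨnn i (center j))
        calc Cup i j * Cup i j = |Cup i j| * |Cup i j| := (abs_mul_abs_self _).symm
          _ ≤ (L * s) * (L * s) := mul_self_le_mul_self (abs_nonneg _) (key j)
    _ = (∑ j, Ψ i (center j)) * ((L * s) * (L * s)) := by rw [← Finset.sum_mul]
    _ ≤ (⨆ i' : Fin du, ∑ j, Ψ i' (center j)) * ((L * s) * (L * s)) := by
        apply mul_le_mul_of_nonneg_right _ (mul_self_nonneg _)
        have hbdd2 : BddAbove (Set.range fun i' : Fin du => ∑ j, Ψ i' (center j)) :=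
          (Set.finite_range _).bddAbove
        exact le_ciSup hbdd2 i
    _ = L_R * Cuu i i * maxDiag Cuu := by
        rw [hL_R, show (L * s) * (L * s) = L ^ 2 * (s * s) by ring, hsmul]; ring
end

section
/- Regularity of linearized localization: let C ∈ ℝ^{d_u × d_u} be symmetric positive semidefinite, let Ψ ∈ ℝ^{d_u × d_u} have nonnegative entries, and let H ∈ ℝ^{d_y × d_u} satisfy Σ_{j=1}^{d_y}|H_{j,k}| ≤ L for all k and Σ_{k=1}^{d_u}|H_{j,k}| ≤ L for all j. Define C^{up} = C Hᵀ and C̃^{up} = (C ∘ Ψ) Hᵀ. Then for every index i, Σ_{j=1}^{d_y} C̃^{up}_{i,j} C^{up}_{i,j} ≤ L_R · C_{i,i} · ‖C‖_max, where L_R = L² · max_i Σ_{k=1}^{d_u} Ψ_{i,k}. -/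
open Matrix

/-- **Regularity of the linearized localization scheme** (Lemma 4.5 of the paper).
With `C^{up} = C Hᵀ` and `C̃^{up} = (C ∘ Ψ) Hᵀ`, if the rows and columns of `H` have
absolute sums at most `L`, then for every `i`,
`Σ_j C̃^{up}_{i,j} C^{up}_{i,j} ≤ L_R C_{i,i} ‖C‖_max`, where `L_R = L² max_i Σ_k Ψ_{i,k}`. -/
theorem regularity_linearized_localization {du dy : ℕ}
    (C Ψ : Matrix (Fin du) (Fin du) ℝ) (H : Matrix (Fin dy) (Fin du) ℝ)
    (hC : C.PosSemidef) (hΨnn : ∀ i j, 0 ≤ Ψ i j)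
    (L : ℝ)
    (hcol : ∀ k, ∑ j, |H j k| ≤ L) (hrow : ∀ j, ∑ k, |H j k| ≤ L)
    (L_R : ℝ) (hL_R : L_R = L ^ 2 * ⨆ i : Fin du, ∑ k, Ψ i k) :
    ∀ i, ∑ j, (C.hadamard Ψ * Hᵀ) i j * (C * Hᵀ) i j ≤ L_R * C i i * maxDiag C := by
  intro i
  have hne : Nonempty (Fin du) := ⟨i⟩
  have hdnn : ∀ k, 0 ≤ C k k := fun k => by
    exact hC.diag_nonneg
  have hM : ∀ k, C k k ≤ maxDiag C := fun k =>
    le_ciSup (f := fun k => C k k) (Set.Finite.bddAbove (Set.finite_range _)) k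
  have hMnn : 0 ≤ maxDiag C := (hdnn i).trans (hM i)
  -- entrywise Cauchy-Schwarz for the PSD matrix C
  have hsq : ∀ k l, (C k l) ^ 2 ≤ C k k * C l l := by
    obtain ⟨B, hB⟩ : ∃ B : Matrix (Fin du) (Fin du) ℝ, C = Bᴴ * B := by
      classical
      open scoped MatrixOrder in
      obtain ⟨B, hB⟩ := CStarAlgebra.nonneg_iff_eq_star_mul_self.mp hC.nonneg
      exact ⟨B, hB⟩
    intro k l
    have hent : ∀ a b, C a b = ∑ m, B m a * B m b := by
      intro a b
      rw [hB]
      simp [Matrix.mul_apply, Matrix.conjTranspose_apply]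
    rw [hent k l, hent k k, hent l l]
    simpa [sq] using Finset.sum_mul_sq_le_sq_mul_sq Finset.univ (fun m => B m k) (fun m => B m l)
  set s : ℝ := Real.sqrt (C i i * maxDiag C) with hs
  have hsnn : 0 ≤ s := Real.sqrt_nonneg _
  have hss : s * s = C i i * maxDiag C := by
    rw [hs]; exact Real.mul_self_sqrt (mul_nonneg (hdnn i) hMnn)
  have hent : ∀ k, |C i k| ≤ s := by
    intro k
    rw [hs, ← Real.sqrt_sq_eq_abs]
    exact Real.sqrt_le_sqrt ((hsq i k).trans (mul_le_mul_of_nonneg_left (hM k) (hdnn i)))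
  have hL : 0 ≤ L := le_trans (Finset.sum_nonneg fun j _ => abs_nonneg _) (hcol i)
  -- bound each factor
  have hA : ∀ j, |(C.hadamard Ψ * Hᵀ) i j| ≤ s * ∑ k, Ψ i k * |H j k| := by
    intro j
    simp only [Matrix.mul_apply, Matrix.transpose_apply, Matrix.hadamard_apply]
    calc |∑ k, C i k * Ψ i k * H j k| ≤ ∑ k, |C i k * Ψ i k * H j k| :=
          Finset.abs_sum_le_sum_abs _ _
      _ ≤ ∑ k, s * (Ψ i k * |H j k|) := by
          refine Finset.sum_le_sum fun k _ => ?_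
          rw [abs_mul, abs_mul, abs_of_nonneg (hΨnn i k)]
          have := mul_le_mul_of_nonneg_right (hent k)
            (mul_nonneg (hΨnn i k) (abs_nonneg (H j k)))
          calc |C i k| * Ψ i k * |H j k| = |C i k| * (Ψ i k * |H j k|) := by ring
            _ ≤ s * (Ψ i k * |H j k|) := this
      _ = s * ∑ k, Ψ i k * |H j k| := by rw [Finset.mul_sum]
  have hB : ∀ j, |(C * Hᵀ) i j| ≤ s * L := by
    intro j
    simp only [Matrix.mul_apply, Matrix.transpose_apply]
    calc |∑ k, C i k * H j k| ≤ ∑ k, |C i k * H j k| := Finset.abs_sum_le_sum_abs _ _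
      _ ≤ ∑ k, s * |H j k| := by
          refine Finset.sum_le_sum fun k _ => ?_
          rw [abs_mul]
          exact mul_le_mul_of_nonneg_right (hent k) (abs_nonneg _)
      _ = s * ∑ k, |H j k| := by rw [Finset.mul_sum]
      _ ≤ s * L := mul_le_mul_of_nonneg_left (hrow j) hsnn
  have hΨsum : ∑ k, Ψ i k ≤ ⨆ i : Fin du, ∑ k, Ψ i k :=
    le_ciSup (f := fun i => ∑ k, Ψ i k) (Set.Finite.bddAbove (Set.finite_range _)) i
  calc ∑ j, (C.hadamard Ψ * Hᵀ) i j * (C * Hᵀ) i j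
      ≤ ∑ j, (s * ∑ k, Ψ i k * |H j k|) * (s * L) := by
        refine Finset.sum_le_sum fun j _ => ?_
        calc (C.hadamard Ψ * Hᵀ) i j * (C * Hᵀ) i j
            ≤ |(C.hadamard Ψ * Hᵀ) i j * (C * Hᵀ) i j| := le_abs_self _
          _ = |(C.hadamard Ψ * Hᵀ) i j| * |(C * Hᵀ) i j| := abs_mul _ _
          _ ≤ (s * ∑ k, Ψ i k * |H j k|) * (s * L) := by
              refine mul_le_mul (hA j) (hB j) (abs_nonneg _) ?_
              exact mul_nonneg hsnn (Finset.sum_nonneg fun k _ =>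
                mul_nonneg (hΨnn i k) (abs_nonneg _))
    _ = (s * s) * L * ∑ j, ∑ k, Ψ i k * |H j k| := by
        rw [Finset.mul_sum]; congr 1; ext j; ring
    _ = (C i i * maxDiag C) * L * ∑ k, Ψ i k * ∑ j, |H j k| := by
        rw [hss, Finset.sum_comm]
        congr 1
        exact Finset.sum_congr rfl fun k _ => (Finset.mul_sum _ _ _).symm
    _ ≤ (C i i * maxDiag C) * L * ∑ k, Ψ i k * L := by
        refine mul_le_mul_of_nonneg_left (Finset.sum_le_sum fun k _ =>
          mul_le_mul_of_nonneg_left (hcol k) (hΨnn i k)) ?_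
        exact mul_nonneg (mul_nonneg (hdnn i) hMnn) hL
    _ = L ^ 2 * (∑ k, Ψ i k) * C i i * maxDiag C := by
        rw [← Finset.sum_mul]; ring
    _ ≤ L_R * C i i * maxDiag C := by
        rw [hL_R]
        refine mul_le_mul_of_nonneg_right (mul_le_mul_of_nonneg_right ?_ (hdnn i)) hMnn
        exact mul_le_mul_of_nonneg_left hΨsum (sq_nonneg L)
end

section
/- Ensemble covariance lower bound (Theorem 4.5 of the paper): fix σ > 0, c_o > 0, L_R > 0 and ψ₀ > 0. Let C^{uu} : [0,∞) → ℝ^{d_u × d_u} be a continuously differentiable family of symmetric positive semidefinite matrices and C^{up}, C̃^{up} : [0,∞) → ℝ^{d_u × d_y} continuous with d/dt C^{uu}_{i,i}(t) = −2 Σ_{j=1}^{d_y} C̃^{up}_{i,j}(t) C^{up}_{i,j}(t) + σ/(t+1)² for all i and t ≥ 0. Assume: (a) observability: for all t, with i* an index where C^{uu}_{i*,i*}(t) = ‖C^{uu}(t)‖_max, Σ_j C̃^{up}_{i*,j} C^{up}_{i*,j} ≥ c_o (C^{uu}_{i*,i*})²; (b) regularity: for all t and all i, Σ_j C̃^{up}_{i,j}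 C^{up}_{i,j} ≤ L_R C^{uu}_{i,i}(t) ‖C^{uu}(t)‖_max; (c) the localization matrix Ψ ∈ ℝ^{d_u × d_u} is symmetric positive definite with λ_min(Ψ) ≥ ψ₀. Fix δ ∈ (0,1) and let M_C = (√(1 + 8 c_o σ) + 1)/(4 c_o (1 − δ)), assuming 2 L_R M_C > 1. Then there exists t₁ ≥ 0 such that for all t > t₁ and every index i, C^{uu}_{i,i}(t) ≥ m_c/(t+1), where m_c = σ(1 − δ)/(2 L_R M_C − 1); moreover λ_min(C^{uu}(t) ∘ Ψ) ≥ ψ₀ · min_i C^{uu}_{i,i}(t) ≥ ψ₀ m_c/(t+1). -/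
open Matrix Filter Set Topology

lemma schur_aux {n : ℕ} {A : Matrix (Fin n) (Fin n) ℝ} (V : Matrix (Fin n) (Fin n) ℝ) (x : Fin n → ℝ) :
      star x ⬝ᵥ ((A.hadamard (Vᴴ * V)) *ᵥ x)
        = ∑ k, star (fun i => V k i * x i) ⬝ᵥ (A *ᵥ fun i => V k i * x i) := by
  simp only [dotProduct, Matrix.mulVec, Matrix.hadamard_apply, Matrix.mul_apply,
    Matrix.conjTranspose_apply, star_trivial, Finset.mul_sum, Finset.sum_mul]
  have step : ∀ i : Fin n, (∑ j, ∑ k, x i * (A i j * (V k i * V k j) * x j))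
      = ∑ k, ∑ j, x i * (A i j * (V k i * V k j) * x j) := fun i => Finset.sum_comm
  rw [Finset.sum_congr rfl fun i _ => step i, Finset.sum_comm]
  refine Finset.sum_congr rfl fun k _ => Finset.sum_congr rfl fun i _ =>
    Finset.sum_congr rfl fun j _ => by ring

lemma schurPSD {n : ℕ} {A B : Matrix (Fin n) (Fin n) ℝ} (hA : A.PosSemidef) (hB : B.PosSemidef) :
    (A.hadamard B).PosSemidef := by
  exact hA.hadamard hB

lemma slope_neg_contra (g : ℝ → ℝ) {d t0 ts : ℝ} (h0 : t0 < ts)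
    (hg : HasDerivAt g d ts) (hd : d < 0)
    (hleft : ∀ s, t0 ≤ s → s < ts → g s < 0) (hzero : g ts = 0) : False := by
  have hslope := hasDerivAt_iff_tendsto_slope.mp hg
  have hev1 : ∀ᶠ s in 𝓝[≠] ts, slope g ts s < 0 := hslope.eventually (Iio_mem_nhds hd)
  have hle : 𝓝[<] ts ≤ 𝓝[≠] ts := nhdsWithin_mono _ fun s hs => ne_of_lt hs
  have hev2 : Ioo t0 ts ∈ 𝓝[<] ts := Ioo_mem_nhdsLT_of_mem ⟨h0, le_refl ts⟩
  obtain ⟨s, hs1, hs2⟩ := ((hev1.filter_mono hle).and (eventually_of_mem hev2 fun s hs => hs)).exists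
  have hgs : g s < 0 := hleft s hs2.1.le hs2.2
  rw [slope_def_field, hzero, sub_zero] at hs1
  have : 0 < g s / (s - ts) := div_pos_iff.mpr (Or.inr ⟨hgs, by linarith [hs2.2]⟩)
  linarith

lemma psd_diag_nonneg {n : ℕ} {A : Matrix (Fin n) (Fin n) ℝ} (h : A.PosSemidef) (i : Fin n) :
    0 ≤ A i i := by
  exact h.diag_nonneg

lemma alg1 (L M m A P q K : ℝ) (hK : K = 2 * L * M) :
    2 * (L * (m / P - A * q) * (M / P)) = K * m / P ^ 2 - K * (A * (q * P⁻¹)) := by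
  subst hK
  by_cases hP : P = 0
  · simp [hP]
  · field_simp

lemma alg2 (m A K P q S x : ℝ) :
    (-(m / P ^ 2) - A * (-K * q)) - (-2 * S + x / P ^ 2)
      = 2 * S + K * (A * q) - m / P ^ 2 - x / P ^ 2 := by ring

lemma alg3 (a b c P : ℝ) : (a + b - c) / P ^ 2 = a / P ^ 2 + b / P ^ 2 - c / P ^ 2 := by ring

set_option maxHeartbeats 2000000 in
/-- **Ensemble covariance lower bound** (Theorem 4.5 of the paper).
Under observability, regularity and a positive definite localization matrix `Ψ` with
`λ_min(Ψ) ≥ ψ₀` (expressed as `Ψ - ψ₀ I ⪰ 0`), the diagonal entries of the ensemble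
covariance decay at most like `m_c/(t+1)`, and the smallest eigenvalue of the localized
covariance `C^{uu} ∘ Ψ` is at least `ψ₀ min_i C^{uu}_{i,i} ≥ ψ₀ m_c/(t+1)` (the eigenvalue
bounds being expressed via positive semidefiniteness of the shifted matrices). -/
theorem ensemble_covariance_lower_bound {du dy : ℕ} (hdu : 0 < du)
    (σ c_o L_R ψ₀ : ℝ) (hσ : 0 < σ) (hc_o : 0 < c_o) (hL_R : 0 < L_R) (hψ₀ : 0 < ψ₀)
    (Cuu : ℝ → Matrix (Fin du) (Fin du) ℝ)
    (Cup Ctup : ℝ → Matrix (Fin du) (Fin dy) ℝ)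
    (hpsd : ∀ t, 0 ≤ t → (Cuu t).PosSemidef)
    (hCupCont : ContinuousOn Cup (Set.Ici (0 : ℝ)))
    (hCtupCont : ContinuousOn Ctup (Set.Ici (0 : ℝ)))
    (hODE : ∀ t, 0 ≤ t → ∀ i,
      HasDerivAt (fun s => Cuu s i i)
        (-2 * ∑ j, Ctup t i j * Cup t i j + σ / (t + 1) ^ 2) t)
    (hobs : ∀ t, 0 ≤ t → ∀ istar : Fin du,
      (∀ i, Cuu t i i ≤ Cuu t istar istar) →
      c_o * Cuu t istar istar ^ 2 ≤ ∑ j, Ctup t istar j * Cup t istar j)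
    (hreg : ∀ t, 0 ≤ t → ∀ i,
      ∑ j, Ctup t i j * Cup t i j ≤ L_R * Cuu t i i * maxDiag (Cuu t))
    (Ψ : Matrix (Fin du) (Fin du) ℝ) (hΨ : Ψ.PosDef)
    (hΨmin : (Ψ - ψ₀ • (1 : Matrix (Fin du) (Fin du) ℝ)).PosSemidef)
    (δ : ℝ) (hδ : 0 < δ) (hδ' : δ < 1)
    (M_C : ℝ) (hM_C : M_C = (Real.sqrt (1 + 8 * c_o * σ) + 1) / (4 * c_o * (1 - δ)))
    (hMC1 : 1 < 2 * L_R * M_C)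
    (m_c : ℝ) (hm_c : m_c = σ * (1 - δ) / (2 * L_R * M_C - 1)) :
    ∃ t₁ : ℝ, 0 ≤ t₁ ∧ ∀ t, t₁ < t →
      (∀ i, m_c / (t + 1) ≤ Cuu t i i) ∧
      ((Cuu t).hadamard Ψ -
          (ψ₀ * ⨅ i, Cuu t i i) • (1 : Matrix (Fin du) (Fin du) ℝ)).PosSemidef ∧
      ψ₀ * m_c / (t + 1) ≤ ψ₀ * ⨅ i, Cuu t i i := by
  haveI : Nonempty (Fin du) := Fin.pos_iff_nonempty.mp hdu
  have h1δ : 0 < 1 - δ := by linarith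
  set sq := Real.sqrt (1 + 8 * c_o * σ) with hsq
  have hsq0 : 0 ≤ sq := Real.sqrt_nonneg _
  have hsq2 : sq ^ 2 = 1 + 8 * c_o * σ := Real.sq_sqrt (by positivity)
  set r : ℝ := (sq + 1) / (4 * c_o) with hr
  have hr0 : 0 < r := by positivity
  have hrquad : 2 * c_o * r ^ 2 - r - σ = 0 := by
    rw [hr]; field_simp; linear_combination 2 * hsq2
  have hMCr : r < M_C := by
    have hM : M_C = r / (1 - δ) := by rw [hM_C, hr]; field_simp
    rw [hM, lt_div_iff₀ h1δ]; nlinarith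
  set M' : ℝ := (r + M_C) / 2 with hM'
  have hM'r : r < M' := by rw [hM']; linarith
  have hM'MC : M' < M_C := by rw [hM']; linarith
  have hM'0 : 0 < M' := lt_trans hr0 hM'r
  have hquadM' : 0 < 2 * c_o * M' ^ 2 - M' - σ := by
    have key : 0 < 2 * c_o * (M' + r) - 1 := by
      have h3 : 2 * c_o * (2 * r) < 2 * c_o * (M' + r) :=
        mul_lt_mul_of_pos_left (by linarith) (by positivity)
      have h4 : 2 * c_o * (2 * r) = sq + 1 := by rw [hr]; field_simp; ring
      linarith
    nlinarith [mul_pos (sub_pos.mpr hM'r) key]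
  have hdiag : ∀ t, 0 ≤ t → ∀ i, 0 ≤ Cuu t i i := fun t ht i => psd_diag_nonneg (hpsd t ht) i
  have hcont : ∀ (i : Fin du) (t : ℝ), 0 ≤ t → ContinuousAt (fun s => Cuu s i i) t :=
    fun i t ht => (hODE t ht i).continuousAt
  -- extended diagonal functions
  set E : Fin du → ℝ → ℝ := fun i t => Cuu (max t 0) i i with hE
  have hEcont : ∀ i, Continuous (E i) := by
    intro i
    rw [continuous_iff_continuousAt]
    intro t
    have hrepr : E i = (fun s => Cuu s i i) ∘ (fun t : ℝ => max t 0) := rfl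
    rw [hrepr]
    exact ContinuousAt.comp (hcont i (max t 0) (le_max_right _ _))
      ((continuous_id.max continuous_const).continuousAt)
  set A₀ : ℝ := ⨆ i, Cuu 0 i i with hA₀def
  have hbdd : ∀ t : ℝ, BddAbove (Set.range fun i => Cuu t i i) :=
    fun t => Set.Finite.bddAbove (Set.finite_range _)
  have hA₀ : ∀ i, Cuu 0 i i ≤ A₀ := fun i => le_ciSup (hbdd 0) i
  have hA₀0 : 0 ≤ A₀ := le_trans (hdiag 0 le_rfl (Classical.arbitrary _)) (hA₀ _)
  set τ : ℝ := min 1 (M' / (A₀ + 1)) with hτ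
  have hτ0 : 0 < τ := lt_min one_pos (div_pos hM'0 (by linarith))
  have hτ1 : τ ≤ 1 := min_le_left _ _
  have hτA : τ * (A₀ + 1) ≤ M' := by
    have h := min_le_right 1 (M' / (A₀ + 1))
    calc τ * (A₀ + 1) ≤ (M' / (A₀ + 1)) * (A₀ + 1) := by
          apply mul_le_mul_of_nonneg_right h (by linarith)
      _ = M' := by field_simp
  have hM'τ : A₀ + 1 ≤ M' / τ := (le_div_iff₀ hτ0).mpr (by linarith [hτA, mul_comm τ (A₀ + 1)])
  -- Step 1: upper bound
  have hub : ∀ t, 0 ≤ t → ∀ i, Cuu t i i < M' / (t + τ) := by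
    by_contra hcon
    push_neg at hcon
    obtain ⟨t0, ht0, i0, hi0⟩ := hcon
    set S : Set ℝ := {u : ℝ | ∃ i, M' / (max u 0 + τ) ≤ E i u} with hS
    have hdenom : ∀ u : ℝ, (0:ℝ) < max u 0 + τ := fun u => by
      have h := le_max_right u 0; linarith
    have hBcont : Continuous fun u : ℝ => M' / (max u 0 + τ) :=
      continuous_const.div ((continuous_id.max continuous_const).add continuous_const)
        (fun u => ne_of_gt (hdenom u))
    have hEts : ∀ (j : Fin du) (u : ℝ), 0 ≤ u → E j u = Cuu u j j := fun j u hu => by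
      rw [hE]; simp [max_eq_left hu]
    have hSclosed : IsClosed S := by
      have hrepr : S = ⋃ i, {u : ℝ | M' / (max u 0 + τ) ≤ E i u} := by
        ext u; simp [hS, Set.mem_iUnion]
      rw [hrepr]
      exact isClosed_iUnion_of_finite fun i => isClosed_le hBcont (hEcont i)
    have hnotmem : ∀ u : ℝ, u ≤ 0 → u ∉ S := by
      rintro u hu ⟨i, hi⟩
      rw [max_eq_right hu, zero_add] at hi
      have hEu : E i u = Cuu 0 i i := by rw [hE]; simp [max_eq_right hu]
      rw [hEu] at hi
      have h1 := hA₀ i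
      have h2 := hM'τ
      linarith
    have hSne : S.Nonempty := by
      refine ⟨t0, ⟨i0, ?_⟩⟩
      rw [max_eq_left ht0, hEts i0 t0 ht0]
      exact hi0
    have hSbd : BddBelow S := ⟨0, fun u hu => le_of_not_gt fun h => hnotmem u h.le hu⟩
    have htsS : sInf S ∈ S := hSclosed.csInf_mem hSne hSbd
    set ts := sInf S with htsdef
    have hts0 : 0 < ts := by
      rcases lt_or_ge 0 ts with h | h
      · exact h
      · exact absurd htsS (hnotmem ts h)
    obtain ⟨i, hi⟩ := htsS
    rw [max_eq_left hts0.le, hEts i ts hts0.le] at hi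
    have hleftall : ∀ (j : Fin du) s, 0 ≤ s → s < ts → Cuu s j j < M' / (s + τ) := by
      intro j s hs hsts
      by_contra hcon2
      push_neg at hcon2
      have hsS : s ∈ S := ⟨j, by rw [max_eq_left hs, hEts j s hs]; exact hcon2⟩
      exact absurd (csInf_le hSbd hsS) (not_le.mpr hsts)
    have hlim : ∀ j : Fin du, Cuu ts j j ≤ M' / (ts + τ) := by
      intro j
      have h1 : Filter.Tendsto (fun s => Cuu s j j) (nhdsWithin ts (Set.Iio ts))
          (nhds (Cuu ts j j)) :=
        (hcont j ts hts0.le).tendsto.mono_left nhdsWithin_le_nhds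
      have hc : ContinuousAt (fun s : ℝ => M' / (s + τ)) ts := by
        apply ContinuousAt.div continuousAt_const
        · exact (continuous_id.add continuous_const).continuousAt
        · exact ne_of_gt (by linarith)
      have h2 : Filter.Tendsto (fun s : ℝ => M' / (s + τ)) (nhdsWithin ts (Set.Iio ts))
          (nhds (M' / (ts + τ))) := hc.tendsto.mono_left nhdsWithin_le_nhds
      refine le_of_tendsto_of_tendsto h1 h2 ?_
      filter_upwards [Ioo_mem_nhdsLT_of_mem (Set.mem_Ioc.mpr ⟨hts0, le_rfl⟩)] with s hs
      exact (hleftall j s hs.1.le hs.2).le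
    have heq : Cuu ts i i = M' / (ts + τ) := le_antisymm (hlim i) hi
    have hmaxat : ∀ j, Cuu ts j j ≤ Cuu ts i i := fun j => heq ▸ hlim j
    have hSsum := hobs ts hts0.le i hmaxat
    rw [heq] at hSsum
    have hτts : (0:ℝ) < ts + τ := by linarith
    have hBd : HasDerivAt (fun s : ℝ => M' / (s + τ)) (-(M' / (ts + τ) ^ 2)) ts := by
      have h1 : HasDerivAt (fun s : ℝ => s + τ) 1 ts := (hasDerivAt_id ts).add_const τ
      have h2 := (h1.inv (ne_of_gt hτts)).const_mul M'
      have hfe : (fun s : ℝ => M' * (s + τ)⁻¹) = fun s : ℝ => M' / (s + τ) := by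
        funext s; rw [div_eq_mul_inv]
      simp only [Pi.inv_apply] at h2
      rw [hfe] at h2
      exact h2.congr_deriv (by ring)
    have hdneg : (-2 * (∑ j, Ctup ts i j * Cup ts i j) + σ / (ts + 1) ^ 2)
        - -(M' / (ts + τ) ^ 2) < 0 := by
      have e1 : σ / (ts + 1) ^ 2 ≤ σ / (ts + τ) ^ 2 := by
        apply div_le_div_of_nonneg_left hσ.le (by positivity)
        nlinarith
      have e3 : (M' / (ts + τ)) ^ 2 = M' ^ 2 / (ts + τ) ^ 2 := div_pow _ _ _
      rw [e3] at hSsum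
      have e4 : σ / (ts + τ) ^ 2 + M' / (ts + τ) ^ 2 - 2 * (c_o * (M' ^ 2 / (ts + τ) ^ 2))
          = (σ + M' - 2 * c_o * M' ^ 2) / (ts + τ) ^ 2 := by ring
      have e5 : (σ + M' - 2 * c_o * M' ^ 2) / (ts + τ) ^ 2 < 0 :=
        div_neg_of_neg_of_pos (by linarith) (by positivity)
      linarith
    exact slope_neg_contra (fun s => Cuu s i i - M' / (s + τ)) hts0
      ((hODE ts hts0.le i).sub hBd) hdneg
      (fun s hs hsts => sub_neg.mpr (hleftall i s hs hsts))
      (sub_eq_zero.mpr heq)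
  -- Step 2
  set t₂ : ℝ := max 0 ((M' - M_C * τ) / (M_C - M')) with ht₂def
  have ht₂0 : 0 ≤ t₂ := le_max_left _ _
  have hstep2 : ∀ t, t₂ ≤ t → M' / (t + τ) ≤ M_C / (t + 1) := by
    intro t ht
    have ht0 : 0 ≤ t := le_trans ht₂0 ht
    have h1 : (M' - M_C * τ) / (M_C - M') ≤ t := le_trans (le_max_right _ _) ht
    have h2 : M' - M_C * τ ≤ t * (M_C - M') := by
      rw [div_le_iff₀ (by linarith : (0:ℝ) < M_C - M')] at h1; linarith
    rw [div_le_div_iff₀ (by linarith) (by linarith)]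
    rw [show t * (M_C - M') = t * M_C - t * M' from by ring] at h2
    rw [show M' * (t + 1) = t * M' + M' from by ring,
      show M_C * (t + τ) = t * M_C + M_C * τ from by ring]
    linarith
  have hmaxD : ∀ t, t₂ ≤ t → maxDiag (Cuu t) ≤ M_C / (t + 1) := by
    intro t ht
    exact ciSup_le fun i => le_trans (hub t (le_trans ht₂0 ht) i).le (hstep2 t ht)
  -- constants for lower bound
  set K : ℝ := 2 * L_R * M_C with hK
  have hK1 : 1 < K := hMC1
  set m' : ℝ := σ * (1 - δ / 2) / (K - 1) with hm'
  have hm'0 : 0 < m' := by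
    rw [hm']; exact div_pos (mul_pos hσ (by linarith)) (by linarith)
  have hmcm' : m_c < m' := by
    rw [hm_c, hm']
    rw [div_lt_div_iff₀ (by linarith) (by linarith)]
    exact mul_lt_mul_of_pos_right (mul_lt_mul_of_pos_left (by linarith) hσ) (by linarith)
  have hm'K : σ - (K - 1) * m' = σ * δ / 2 := by
    have hK0 : K - 1 ≠ 0 := ne_of_gt (by linarith)
    rw [hm']
    field_simp [hK0]
    ring
  set Acst : ℝ := (m' + 1) * (t₂ + 1) ^ (K - 1 : ℝ) with hAcst
  have hAcst0 : 0 < Acst := by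
    apply mul_pos (by linarith)
    exact Real.rpow_pos_of_pos (by linarith) _
  set b : ℝ → ℝ := fun t => m' / (t + 1) - Acst * (t + 1) ^ (-K : ℝ) with hb
  have hbeq : ∀ u : ℝ, b u = m' / (u + 1) - Acst * (u + 1) ^ (-K : ℝ) := fun u => rfl
  have hbt₂ : b t₂ < 0 := by
    rw [hbeq]
    have hpos : (0:ℝ) < t₂ + 1 := by linarith
    have hAq : Acst * (t₂ + 1) ^ (-K : ℝ) = (m' + 1) / (t₂ + 1) := by
      rw [hAcst, mul_assoc, ← Real.rpow_add hpos,
        show K - 1 + -K = (-1 : ℝ) from by ring, Real.rpow_neg_one, div_eq_mul_inv]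
    rw [hAq]
    have h1 : m' / (t₂ + 1) - (m' + 1) / (t₂ + 1) = -(1 / (t₂ + 1)) := by ring
    rw [h1]
    simp only [neg_neg, neg_lt_zero]
    positivity
  -- Step 3: lower bound
  have hlb : ∀ (i : Fin du) t, t₂ ≤ t → b t < Cuu t i i := by
    intro i
    by_contra hcon
    push_neg at hcon
    obtain ⟨t0, ht0, hi0⟩ := hcon
    set S : Set ℝ := {u : ℝ | Cuu (max u t₂) i i ≤ b (max u t₂)} with hS
    have hmaxc : Continuous fun u : ℝ => max u t₂ + 1 :=
      (continuous_id.max continuous_const).add continuous_const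
    have hmaxpos : ∀ u : ℝ, (0:ℝ) < max u t₂ + 1 := fun u => by
      have h := le_max_right u t₂; linarith
    have hbcont : Continuous fun u : ℝ => b (max u t₂) := by
      have h1 : Continuous fun u : ℝ => m' / (max u t₂ + 1) :=
        continuous_const.div hmaxc fun u => ne_of_gt (hmaxpos u)
      have h2 : Continuous fun u : ℝ => (max u t₂ + 1) ^ (-K : ℝ) :=
        hmaxc.rpow_const fun u => Or.inl (ne_of_gt (hmaxpos u))
      have h3 : Continuous fun u : ℝ => m' / (max u t₂ + 1) - Acst * (max u t₂ + 1) ^ (-K : ℝ) :=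
        h1.sub (continuous_const.mul h2)
      convert h3 using 1
    have hCcont : Continuous fun u : ℝ => Cuu (max u t₂) i i := by
      rw [continuous_iff_continuousAt]
      intro u
      have hrepr : (fun u : ℝ => Cuu (max u t₂) i i)
          = (fun s => Cuu s i i) ∘ (fun u : ℝ => max u t₂) := rfl
      rw [hrepr]
      exact ContinuousAt.comp (hcont i (max u t₂) (le_trans ht₂0 (le_max_right _ _)))
        ((continuous_id.max continuous_const).continuousAt)
    have hSclosed : IsClosed S := isClosed_le hCcont hbcont
    have hnotmem : ∀ u : ℝ, u ≤ t₂ → u ∉ S := by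
      intro u hu hmem
      rw [hS, Set.mem_setOf_eq, max_eq_right hu] at hmem
      have := hdiag t₂ ht₂0 i
      linarith
    have hSne : S.Nonempty := ⟨t0, by rw [hS, Set.mem_setOf_eq, max_eq_left ht0]; exact hi0⟩
    have hSbd : BddBelow S := ⟨t₂, fun u hu => le_of_not_gt fun h => hnotmem u h.le hu⟩
    have htsS : sInf S ∈ S := hSclosed.csInf_mem hSne hSbd
    set ts := sInf S with htsdef
    have hts2 : t₂ < ts := by
      rcases lt_or_ge t₂ ts with h | h
      · exact h
      · exact absurd htsS (hnotmem ts h)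
    have hts0 : (0:ℝ) ≤ ts := le_trans ht₂0 hts2.le
    rw [hS, Set.mem_setOf_eq, max_eq_left hts2.le] at htsS
    have hleft : ∀ s, t₂ ≤ s → s < ts → b s < Cuu s i i := by
      intro s hs hsts
      by_contra hcon2
      push_neg at hcon2
      have hsS : s ∈ S := by rw [hS, Set.mem_setOf_eq, max_eq_left hs]; exact hcon2
      exact absurd (csInf_le hSbd hsS) (not_le.mpr hsts)
    have hp : (0:ℝ) < ts + 1 := by linarith
    have hlim : b ts ≤ Cuu ts i i := by
      have h1 : Filter.Tendsto (fun s => Cuu s i i) (nhdsWithin ts (Set.Iio ts))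
          (nhds (Cuu ts i i)) := (hcont i ts hts0).tendsto.mono_left nhdsWithin_le_nhds
      have hcb : ContinuousAt b ts := by
        have h1' : ContinuousAt (fun s : ℝ => m' / (s + 1)) ts :=
          ContinuousAt.div continuousAt_const ((continuous_id.add continuous_const).continuousAt)
            (ne_of_gt hp)
        have h2' : ContinuousAt (fun s : ℝ => (s + 1) ^ (-K : ℝ)) ts :=
          ContinuousAt.rpow_const ((continuous_id.add continuous_const).continuousAt)
            (Or.inl (ne_of_gt hp))
        have h3' : ContinuousAt (fun s : ℝ => m' / (s + 1) - Acst * (s + 1) ^ (-K : ℝ)) ts :=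
          h1'.sub (continuousAt_const.mul h2')
        rw [hb]; exact h3'
      have h2 : Filter.Tendsto b (nhdsWithin ts (Set.Iio ts)) (nhds (b ts)) :=
        hcb.tendsto.mono_left nhdsWithin_le_nhds
      refine le_of_tendsto_of_tendsto h2 h1 ?_
      filter_upwards [Ioo_mem_nhdsLT_of_mem (Set.mem_Ioc.mpr ⟨hts2, le_rfl⟩)] with s hs
      exact (hleft s hs.1.le hs.2).le
    have heq : Cuu ts i i = b ts := le_antisymm htsS hlim
    -- derivative of b at ts
    have hd1 : HasDerivAt (fun s : ℝ => m' / (s + 1)) (-(m' / (ts + 1) ^ 2)) ts := by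
      have h1 : HasDerivAt (fun s : ℝ => s + 1) 1 ts := (hasDerivAt_id ts).add_const 1
      have h2 := (h1.inv (ne_of_gt hp)).const_mul m'
      have hfe : (fun s : ℝ => m' * (s + 1)⁻¹) = fun s : ℝ => m' / (s + 1) := by
        funext s; rw [div_eq_mul_inv]
      simp only [Pi.inv_apply] at h2
      rw [hfe] at h2
      exact h2.congr_deriv (by ring)
    have hd2 : HasDerivAt (fun s : ℝ => ((s : ℝ) + 1) ^ (-K : ℝ))
        (-K * (ts + 1) ^ (-K - 1 : ℝ)) ts := by
      have h1 : HasDerivAt (fun s : ℝ => s + 1) 1 ts := (hasDerivAt_id ts).add_const 1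
      have h2 := h1.rpow_const (p := -K) (Or.inl (ne_of_gt hp))
      simpa using h2
    have hd3 := hd2.const_mul Acst
    have hbd : HasDerivAt b (-(m' / (ts + 1) ^ 2) - Acst * (-K * (ts + 1) ^ (-K - 1 : ℝ))) ts := by
      rw [hb]; exact hd1.sub hd3
    -- value at contact
    have hqq : (ts + 1 : ℝ) ^ (-K : ℝ) * (ts + 1)⁻¹ = (ts + 1) ^ (-K - 1 : ℝ) := by
      rw [show (-K - 1 : ℝ) = -K + (-1) from by ring, Real.rpow_add hp, Real.rpow_neg_one]
    have hv : Cuu ts i i = m' / (ts + 1) - Acst * (ts + 1) ^ (-K : ℝ) := by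
      rw [heq, hbeq]
    have hvnn : (0:ℝ) ≤ m' / (ts + 1) - Acst * (ts + 1) ^ (-K : ℝ) := hv ▸ hdiag ts hts0 i
    have hmaxnn : maxDiag (Cuu ts) ≤ M_C / (ts + 1) := hmaxD ts hts2.le
    have e1 : (∑ j, Ctup ts i j * Cup ts i j)
        ≤ L_R * (m' / (ts + 1) - Acst * (ts + 1) ^ (-K : ℝ)) * (M_C / (ts + 1)) := by
      calc (∑ j, Ctup ts i j * Cup ts i j) ≤ L_R * Cuu ts i i * maxDiag (Cuu ts) :=
            hreg ts hts0 i
        _ = L_R * (m' / (ts + 1) - Acst * (ts + 1) ^ (-K : ℝ)) * maxDiag (Cuu ts) := by rw [hv]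
        _ ≤ L_R * (m' / (ts + 1) - Acst * (ts + 1) ^ (-K : ℝ)) * (M_C / (ts + 1)) :=
            mul_le_mul_of_nonneg_left hmaxnn (mul_nonneg hL_R.le hvnn)
    have e2 : 2 * (∑ j, Ctup ts i j * Cup ts i j)
        ≤ K * m' / (ts + 1) ^ 2 - K * (Acst * ((ts + 1) ^ (-K - 1 : ℝ))) := by
      have he := alg1 L_R M_C m' Acst (ts + 1) ((ts + 1) ^ (-K : ℝ)) K hK
      rw [hqq] at he
      linarith
    have hfin : 0 < σ * δ / 2 / (ts + 1) ^ 2 := by positivity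
    have hdneg : (-(m' / (ts + 1) ^ 2) - Acst * (-K * (ts + 1) ^ (-K - 1 : ℝ)))
        - (-2 * (∑ j, Ctup ts i j * Cup ts i j) + σ / (ts + 1) ^ 2) < 0 := by
      have hKm : K * m' = σ + m' - σ * δ / 2 := by
        have hx : (K - 1) * m' = K * m' - m' := by ring
        linarith [hm'K]
      have hkey2 : K * m' / (ts + 1) ^ 2
          = σ / (ts + 1) ^ 2 + m' / (ts + 1) ^ 2 - σ * δ / 2 / (ts + 1) ^ 2 := by
        rw [hKm]; exact alg3 σ m' (σ * δ / 2) (ts + 1)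
      rw [alg2 m' Acst K (ts + 1) ((ts + 1) ^ (-K - 1 : ℝ))
        (∑ j, Ctup ts i j * Cup ts i j) σ]
      linarith [e2, hfin, hkey2]
    exact slope_neg_contra (fun s => b s - Cuu s i i) hts2
      (hbd.sub (hODE ts hts0 i)) hdneg
      (fun s hs hsts => sub_neg.mpr (hleft s hs hsts))
      (sub_eq_zero.mpr heq.symm)
  -- final time
  set X : ℝ := max (Acst / (m' - m_c)) 1 with hX
  have hX1 : 1 ≤ X := le_max_right _ _
  set t₁ : ℝ := max t₂ (X ^ ((K - 1)⁻¹ : ℝ)) with ht₁def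
  have ht₁0 : 0 ≤ t₁ := le_trans ht₂0 (le_max_left _ _)
  refine ⟨t₁, ht₁0, fun t ht => ?_⟩
  have ht₂t : t₂ ≤ t := le_trans (le_max_left _ _) ht.le
  have ht0 : 0 ≤ t := le_trans ht₂0 ht₂t
  have hbmc : m_c / (t + 1) ≤ b t := by
    have hKpos : (0:ℝ) < K - 1 := by linarith
    have ht1p : (0:ℝ) < t + 1 := by linarith
    have hXpos : (0:ℝ) < X := lt_of_lt_of_le one_pos hX1
    have htX : X ^ ((K - 1)⁻¹ : ℝ) ≤ t := le_trans (le_max_right _ _) ht.le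
    have h1 : X ≤ (t + 1) ^ (K - 1 : ℝ) := by
      calc X = (X ^ ((K - 1)⁻¹ : ℝ)) ^ (K - 1 : ℝ) := by
            rw [← Real.rpow_mul hXpos.le, inv_mul_cancel₀ (ne_of_gt hKpos), Real.rpow_one]
        _ ≤ (t + 1) ^ (K - 1 : ℝ) :=
            Real.rpow_le_rpow (Real.rpow_nonneg hXpos.le _) (by linarith) hKpos.le
    have hmm : (0:ℝ) < m' - m_c := by linarith
    have h2 : Acst ≤ (m' - m_c) * (t + 1) ^ (K - 1 : ℝ) := by
      have hA : Acst / (m' - m_c) ≤ X := le_max_left _ _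
      rw [div_le_iff₀ hmm] at hA
      calc Acst ≤ X * (m' - m_c) := hA
        _ ≤ (t + 1) ^ (K - 1 : ℝ) * (m' - m_c) := mul_le_mul_of_nonneg_right h1 hmm.le
        _ = (m' - m_c) * (t + 1) ^ (K - 1 : ℝ) := by ring
    have h3 : (0:ℝ) < (t + 1) ^ (-K : ℝ) := Real.rpow_pos_of_pos ht1p _
    have h4 := mul_le_mul_of_nonneg_right h2 h3.le
    have h5 : (t + 1 : ℝ) ^ (K - 1 : ℝ) * (t + 1) ^ (-K : ℝ) = (t + 1)⁻¹ := by
      rw [← Real.rpow_add ht1p, show (K - 1 + -K : ℝ) = -1 from by ring, Real.rpow_neg_one]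
    have h6 : Acst * (t + 1) ^ (-K : ℝ) ≤ (m' - m_c) / (t + 1) := by
      calc Acst * (t + 1) ^ (-K : ℝ)
          ≤ (m' - m_c) * (t + 1) ^ (K - 1 : ℝ) * (t + 1) ^ (-K : ℝ) := h4
        _ = (m' - m_c) * ((t + 1) ^ (K - 1 : ℝ) * (t + 1) ^ (-K : ℝ)) := by ring
        _ = (m' - m_c) * (t + 1)⁻¹ := by rw [h5]
        _ = (m' - m_c) / (t + 1) := by rw [div_eq_mul_inv]
    rw [hbeq]
    have hsplit : m' / (t + 1) = m_c / (t + 1) + (m' - m_c) / (t + 1) := by ring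
    linarith
  have hdi : ∀ i, m_c / (t + 1) ≤ Cuu t i i := fun i => le_trans hbmc (hlb i t ht₂t).le
  have hbddB : BddBelow (Set.range fun i => Cuu t i i) := Set.Finite.bddBelow (Set.finite_range _)
  have hμ : m_c / (t + 1) ≤ ⨅ i, Cuu t i i := le_ciInf hdi
  refine ⟨hdi, ?_, ?_⟩
  · have hμle : ∀ i, (⨅ j, Cuu t j j) ≤ Cuu t i i := fun i => ciInf_le hbddB i
    have hid : (Cuu t).hadamard Ψ - (ψ₀ * ⨅ i, Cuu t i i) • (1 : Matrix (Fin du) (Fin du) ℝ)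
        = (Cuu t).hadamard (Ψ - ψ₀ • (1 : Matrix (Fin du) (Fin du) ℝ))
          + Matrix.diagonal (fun i => ψ₀ * (Cuu t i i - ⨅ j, Cuu t j j)) := by
      ext i j
      by_cases h : i = j
      · subst h
        simp [Matrix.hadamard_apply, Matrix.sub_apply, Matrix.smul_apply, Matrix.one_apply,
          Matrix.diagonal]
        ring
      · simp [Matrix.hadamard_apply, Matrix.sub_apply, Matrix.smul_apply, Matrix.one_apply,
          Matrix.diagonal, h]
    rw [hid]
    refine Matrix.PosSemidef.add (schurPSD (hpsd t ht0) hΨmin) ?_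
    refine Matrix.PosSemidef.diagonal ?_
    intro i
    exact mul_nonneg hψ₀.le (by linarith [hμle i])
  · rw [mul_div_assoc]
    exact mul_le_mul_of_nonneg_left hμ hψ₀.le
end

section
/- Hessian-dominated ensemble consistency bound: let G_j : ℝ^{d_u} → ℝ be twice continuously differentiable and suppose there is a matrix Q^j ∈ ℝ^{d_u × d_u} with |[Hess G_j(u)]_{m,n}| ≤ Q^j_{m,n} for all u ∈ ℝ^{d_u} and all m, n, and that Σ_{m,n=1}^{d_u} |Q^j_{m,n}| ≤ L_G. Let u^1, …, u^J ∈ ℝ^{d_u} be an ensemble with mean ū, Ḡ_j = (1/J)Σ_{i=1}^J G_j(u^i), and C^{uu} = (1/(J−1))Σ_{i=1}^J (u^i − ū)(u^i − ū)ᵀ. Then |Ḡ_j − G_j(ū)| ≤ ((J−1)/(2J)) L_G ‖C^{uu}‖_max ≤ (1/2) L_G ‖C^{uu}‖_max. -/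
lemma aux_sum_single {d : ℕ} (w : Fin d → ℝ) :
    ∑ m, w m • (Pi.single m 1 : Fin d → ℝ) = w := by
  funext j
  simp [Finset.sum_apply, Pi.single_apply, mul_ite]

lemma aux_bilin_bound {d : ℕ} (B : (Fin d → ℝ) →L[ℝ] ((Fin d → ℝ) →L[ℝ] ℝ))
    (Q : Matrix (Fin d) (Fin d) ℝ)
    (h : ∀ m n, |B (Pi.single m 1) (Pi.single n 1)| ≤ Q m n) (w : Fin d → ℝ) :
    |B w w| ≤ ∑ m, ∑ n, Q m n * (|w m| * |w n|) := by
  have key : B w w = ∑ m, ∑ n, (w m * w n) * (B (Pi.single n 1) (Pi.single m 1)) := by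
    conv_lhs => rw [← aux_sum_single w]
    simp only [map_sum, map_smul, ContinuousLinearMap.sum_apply,
      ContinuousLinearMap.smul_apply, smul_eq_mul, Finset.mul_sum]
    exact Finset.sum_congr rfl fun m _ => Finset.sum_congr rfl fun n _ => by ring
  rw [key]
  calc |∑ m, ∑ n, (w m * w n) * (B (Pi.single n 1) (Pi.single m 1))|
      ≤ ∑ m, |∑ n, (w m * w n) * (B (Pi.single n 1) (Pi.single m 1))| :=
        Finset.abs_sum_le_sum_abs _ _
    _ ≤ ∑ m, ∑ n, |(w m * w n) * (B (Pi.single n 1) (Pi.single m 1))| := by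
        gcongr with m _
        exact Finset.abs_sum_le_sum_abs _ _
    _ ≤ ∑ m, ∑ n, Q n m * (|w n| * |w m|) := by
        refine Finset.sum_le_sum fun m _ => Finset.sum_le_sum fun n _ => ?_
        rw [abs_mul, abs_mul, mul_comm, mul_comm (|w m|)]
        exact mul_le_mul_of_nonneg_right (h n m) (by positivity)
    _ = ∑ m, ∑ n, Q m n * (|w m| * |w n|) := Finset.sum_comm

lemma aux_onedim (g g' g'' : ℝ → ℝ)
    (hg' : ∀ t, HasDerivAt g (g' t) t)
    (hg'' : ∀ t, HasDerivAt g' (g'' t) t)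
    (M : ℝ) (hM : ∀ t ∈ Set.Icc (0:ℝ) 1, |g'' t| ≤ M) :
    |g 1 - g 0 - g' 0| ≤ M / 2 := by
  have hM0 : 0 ≤ M := le_trans (abs_nonneg _) (hM 0 ⟨le_refl _, by norm_num⟩)
  have hdg' : Differentiable ℝ g' := fun t => (hg'' t).differentiableAt
  have hg'c : Continuous g' := hdg'.continuous
  have hint : IntervalIntegrable (fun t => g' t - g' 0) MeasureTheory.volume 0 1 :=
    (hg'c.sub continuous_const).intervalIntegrable _ _
  have h1 : ∫ t in (0:ℝ)..1, (g' t - g' 0) = g 1 - g 0 - g' 0 := by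
    have hd : ∀ x ∈ Set.uIcc (0:ℝ) 1,
        HasDerivAt (fun t => g t - t * g' 0) (g' x - g' 0) x := by
      intro x _
      exact ((hg' x).sub ((hasDerivAt_id' x).mul_const (g' 0))).congr_deriv (by ring)
    have := intervalIntegral.integral_eq_sub_of_hasDerivAt hd hint
    rw [this]; ring
  have hbound : ∀ t ∈ Set.Icc (0:ℝ) 1, |g' t - g' 0| ≤ M * t := by
    intro t ht
    have := Convex.norm_image_sub_le_of_norm_hasDerivWithin_le
      (f := g') (f' := g'') (s := Set.Icc (0:ℝ) 1)
      (fun x _ => (hg'' x).hasDerivWithinAt)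
      (fun x hx => hM x hx) (convex_Icc 0 1)
      (Set.left_mem_Icc.2 (by norm_num)) ht
    simpa [Real.norm_eq_abs, abs_of_nonneg ht.1] using this
  have hMt : IntervalIntegrable (fun t : ℝ => M * t) MeasureTheory.volume 0 1 :=
    (continuous_const.mul continuous_id).intervalIntegrable _ _
  have h2 : ‖∫ t in (0:ℝ)..1, (g' t - g' 0)‖ ≤ |∫ t in (0:ℝ)..1, M * t| := by
    refine intervalIntegral.norm_integral_le_abs_of_norm_le ?_ hMt
    rw [Set.uIoc_of_le (by norm_num : (0:ℝ) ≤ 1)]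
    filter_upwards [MeasureTheory.ae_restrict_mem measurableSet_Ioc] with t ht
    exact hbound t ⟨le_of_lt ht.1, ht.2⟩
  have h3 : ∫ t in (0:ℝ)..1, M * t = M / 2 := by
    rw [intervalIntegral.integral_const_mul]
    simp [integral_id]
    ring
  rw [h1, h3, Real.norm_eq_abs] at h2
  rwa [abs_of_nonneg (by positivity : (0:ℝ) ≤ M / 2)] at h2

lemma aux_taylor {du : ℕ} (f : (Fin du → ℝ) → ℝ) (hf : ContDiff ℝ 2 f)
    (Q : Matrix (Fin du) (Fin du) ℝ)
    (hQ : ∀ (v : Fin du → ℝ) (m n : Fin du),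
      |fderiv ℝ (fun w => fderiv ℝ f w (Pi.single n 1)) v (Pi.single m 1)| ≤ Q m n)
    (a v : Fin du → ℝ) :
    |f v - f a - fderiv ℝ f a (v - a)| ≤
      (1/2) * ∑ m, ∑ n, Q m n * (|(v - a) m| * |(v - a) n|) := by
  set w : Fin du → ℝ := v - a with hw
  set c : ℝ → (Fin du → ℝ) := fun t => a + t • w with hc
  have hct : ∀ t, HasDerivAt c w t := by
    intro t
    exact (((hasDerivAt_id' t).smul_const w).const_add a).congr_deriv (by simp)
  have hdf : Differentiable ℝ f := hf.differentiable (by norm_num)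
  have h1 : ContDiff ℝ 1 (fderiv ℝ f) := hf.fderiv_right (by norm_num)
  have hdf' : Differentiable ℝ (fderiv ℝ f) := h1.differentiable one_ne_zero
  have hB : ∀ (x : Fin du → ℝ) (m n : Fin du),
      |fderiv ℝ (fderiv ℝ f) x (Pi.single m 1) (Pi.single n 1)| ≤ Q m n := by
    intro x m n
    have h := hQ x m n
    rw [fderiv_clm_apply (hdf' x) (differentiableAt_const _)] at h
    simpa [ContinuousLinearMap.flip_apply] using h
  set g : ℝ → ℝ := fun t => f (c t) with hg
  set g' : ℝ → ℝ := fun t => fderiv ℝ f (c t) w with hg'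
  set g'' : ℝ → ℝ := fun t => fderiv ℝ (fderiv ℝ f) (c t) w w with hg''
  have hgd : ∀ t, HasDerivAt g (g' t) t := by
    intro t
    exact (hdf (c t)).hasFDerivAt.comp_hasDerivAt t (hct t)
  have hgd' : ∀ t, HasDerivAt g' (g'' t) t := by
    intro t
    have hA : HasDerivAt (fun t => fderiv ℝ f (c t)) (fderiv ℝ (fderiv ℝ f) (c t) w) t :=
      (hdf' (c t)).hasFDerivAt.comp_hasDerivAt t (hct t)
    simpa using hA.clm_apply (hasDerivAt_const t w)
  set M : ℝ := ∑ m, ∑ n, Q m n * (|w m| * |w n|) with hM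
  have hMb : ∀ t ∈ Set.Icc (0:ℝ) 1, |g'' t| ≤ M := by
    intro t _
    exact aux_bilin_bound (fderiv ℝ (fderiv ℝ f) (c t)) Q (hB (c t)) w
  have key := aux_onedim g g' g'' hgd hgd' M hMb
  have hc0 : c 0 = a := by simp [hc]
  have hc1 : c 1 = v := by simp [hc, hw]
  have key2 : |f v - f a - fderiv ℝ f a w| ≤ M / 2 := by
    simpa only [hg, hg', hc0, hc1] using key
  linarith
open Matrix

/-- **Hessian-dominated ensemble consistency bound** (Lemma 5.8 of the paper).
If the Hessian of `G_j` is dominated entrywise by `Q^j` with `Σ_{m,n}|Q^j_{m,n}| ≤ L_G`,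
then the ensemble mean of `G_j` deviates from `G_j` at the ensemble mean by at most
`((J-1)/(2J)) L_G ‖C^{uu}‖_max ≤ ½ L_G ‖C^{uu}‖_max`. -/
theorem hessian_dominated_consistency_bound {du J : ℕ} (hJ : 0 < J)
    (Gj : (Fin du → ℝ) → ℝ) (hGj : ContDiff ℝ 2 Gj)
    (Q : Matrix (Fin du) (Fin du) ℝ)
    (hQ : ∀ (v : Fin du → ℝ) (m n : Fin du),
      |fderiv ℝ (fun w => fderiv ℝ Gj w (Pi.single n 1)) v (Pi.single m 1)| ≤ Q m n)
    (L_G : ℝ) (hLG : ∑ m, ∑ n, |Q m n| ≤ L_G)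
    (u : Fin J → Fin du → ℝ)
    (ubar : Fin du → ℝ) (hubar : ubar = (J : ℝ)⁻¹ • ∑ i, u i)
    (Gbar : ℝ) (hGbar : Gbar = (J : ℝ)⁻¹ * ∑ i, Gj (u i))
    (Cuu : Matrix (Fin du) (Fin du) ℝ)
    (hCuu : Cuu = ((J : ℝ) - 1)⁻¹ •
      ∑ i, Matrix.of fun m n => (u i m - ubar m) * (u i n - ubar n)) :
    |Gbar - Gj ubar| ≤ ((J : ℝ) - 1) / (2 * (J : ℝ)) * L_G * maxDiag Cuu ∧
    ((J : ℝ) - 1) / (2 * (J : ℝ)) * L_G * maxDiag Cuu ≤ 1 / 2 * L_G * maxDiag Cuu := by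
  have hJ' : ((J:ℝ)) ≠ 0 := Nat.cast_ne_zero.2 hJ.ne'
  have hJpos : (0:ℝ) < (J:ℝ) := Nat.cast_pos.2 hJ
  have hLG0 : 0 ≤ L_G :=
    le_trans (Finset.sum_nonneg fun m _ => Finset.sum_nonneg fun n _ => abs_nonneg _) hLG
  rcases Nat.lt_or_ge J 2 with hJ1 | hJ2
  · -- J = 1
    have hJe : J = 1 := by omega
    subst hJe
    have hC0 : Cuu = 0 := by rw [hCuu]; norm_num
    have hmd : maxDiag Cuu = 0 := by
      rw [hC0]; unfold maxDiag
      rcases isEmpty_or_nonempty (Fin du) with h | h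
      · exact Real.iSup_of_isEmpty _
      · simp
    have hGb : Gbar = Gj ubar := by
      rw [hGbar, hubar]; simp
    rw [hGb, hmd]; norm_num
  · -- J ≥ 2
    have hJ1R : (1:ℝ) < (J:ℝ) := by exact_mod_cast Nat.one_lt_cast.2 (by omega)
    have hJm1 : (0:ℝ) < (J:ℝ) - 1 := by linarith
    have hdiag : ∀ m, Cuu m m = ((J:ℝ)-1)⁻¹ * ∑ i, (u i m - ubar m)^2 := by
      intro m; rw [hCuu]
      simp [Matrix.smul_apply, Matrix.sum_apply, Matrix.of_apply, smul_eq_mul, sq]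
    have hCmm0 : ∀ m, 0 ≤ Cuu m m := by
      intro m; rw [hdiag m]; positivity
    have hmax : ∀ m, Cuu m m ≤ maxDiag Cuu := fun m =>
      le_ciSup (f := fun i => Cuu i i) (Set.Finite.bddAbove (Set.finite_range _)) m
    have hmd0 : 0 ≤ maxDiag Cuu := by
      rcases isEmpty_or_nonempty (Fin du) with h | h
      · unfold maxDiag; rw [Real.iSup_of_isEmpty]
      · exact le_trans (hCmm0 (Classical.arbitrary _)) (hmax _)
    have hSm : ∀ m, ∑ i, (u i m - ubar m)^2 = ((J:ℝ)-1) * Cuu m m := by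
      intro m; rw [hdiag m]; field_simp
    have hT : ∀ m n, ∑ i, |u i m - ubar m| * |u i n - ubar n| ≤ ((J:ℝ)-1) * maxDiag Cuu := by
      intro m n
      have h1 : ∑ i, |u i m - ubar m| * |u i n - ubar n|
          ≤ ∑ i, ((u i m - ubar m)^2 + (u i n - ubar n)^2)/2 := by
        refine Finset.sum_le_sum fun i _ => ?_
        nlinarith [sq_abs (u i m - ubar m), sq_abs (u i n - ubar n),
          sq_nonneg (|u i m - ubar m| - |u i n - ubar n|)]
      have h2 : ∑ i, ((u i m - ubar m)^2 + (u i n - ubar n)^2)/2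
          = (((J:ℝ)-1) * Cuu m m + ((J:ℝ)-1) * Cuu n n)/2 := by
        rw [← Finset.sum_div, Finset.sum_add_distrib, hSm m, hSm n]
      have h3 := hmax m
      have h4 := hmax n
      calc ∑ i, |u i m - ubar m| * |u i n - ubar n|
          ≤ (((J:ℝ)-1) * Cuu m m + ((J:ℝ)-1) * Cuu n n)/2 := h2 ▸ h1
        _ ≤ ((J:ℝ)-1) * maxDiag Cuu := by nlinarith
    have husum : ∑ i, u i = (J:ℝ) • ubar := by
      rw [hubar, smul_smul, mul_inv_cancel₀ hJ', one_smul]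
    have hzero : ∑ i, (u i - ubar) = 0 := by
      rw [Finset.sum_sub_distrib, husum, Finset.sum_const, Finset.card_univ, Fintype.card_fin,
        ← Nat.cast_smul_eq_nsmul ℝ J ubar, sub_self]
    have hlin : ∑ i, fderiv ℝ Gj ubar (u i - ubar) = 0 := by
      rw [← map_sum, hzero, map_zero]
    have hrep : Gbar - Gj ubar
        = (J:ℝ)⁻¹ * ∑ i, (Gj (u i) - Gj ubar - fderiv ℝ Gj ubar (u i - ubar)) := by
      rw [hGbar, Finset.sum_sub_distrib, Finset.sum_sub_distrib, hlin, sub_zero,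
        Finset.sum_const, Finset.card_univ, Fintype.card_fin, nsmul_eq_mul]
      field_simp
    have hTi : ∀ i, |Gj (u i) - Gj ubar - fderiv ℝ Gj ubar (u i - ubar)| ≤
        (1/2) * ∑ m, ∑ n, Q m n * (|u i m - ubar m| * |u i n - ubar n|) := by
      intro i
      have := aux_taylor Gj hGj Q hQ ubar (u i)
      simpa [Pi.sub_apply] using this
    have hswap : ∑ i, ∑ m, ∑ n, Q m n * (|u i m - ubar m| * |u i n - ubar n|)
        = ∑ m, ∑ n, Q m n * ∑ i, |u i m - ubar m| * |u i n - ubar n| := by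
      rw [Finset.sum_comm]
      refine Finset.sum_congr rfl fun m _ => ?_
      rw [Finset.sum_comm]
      exact Finset.sum_congr rfl fun n _ => (Finset.mul_sum _ _ _).symm
    have hQTb : ∑ m, ∑ n, Q m n * ∑ i, |u i m - ubar m| * |u i n - ubar n|
        ≤ L_G * (((J:ℝ)-1) * maxDiag Cuu) := by
      calc ∑ m, ∑ n, Q m n * ∑ i, |u i m - ubar m| * |u i n - ubar n|
          ≤ ∑ m, ∑ n, |Q m n| * (((J:ℝ)-1) * maxDiag Cuu) := by
            refine Finset.sum_le_sum fun m _ => Finset.sum_le_sum fun n _ => ?_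
            refine mul_le_mul (le_abs_self _) (hT m n)
              (Finset.sum_nonneg fun i _ => by positivity) (abs_nonneg _)
        _ = (∑ m, ∑ n, |Q m n|) * (((J:ℝ)-1) * maxDiag Cuu) := by
            simp only [← Finset.sum_mul]
        _ ≤ L_G * (((J:ℝ)-1) * maxDiag Cuu) :=
            mul_le_mul_of_nonneg_right hLG (by positivity)
    have hmain : |Gbar - Gj ubar| ≤ (J:ℝ)⁻¹ * ((1/2) * (L_G * (((J:ℝ)-1) * maxDiag Cuu))) := by
      rw [hrep, abs_mul, abs_of_nonneg (inv_nonneg.2 hJpos.le)]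
      refine mul_le_mul_of_nonneg_left ?_ (by positivity)
      calc |∑ i, (Gj (u i) - Gj ubar - fderiv ℝ Gj ubar (u i - ubar))|
          ≤ ∑ i, |Gj (u i) - Gj ubar - fderiv ℝ Gj ubar (u i - ubar)| :=
            Finset.abs_sum_le_sum_abs _ _
        _ ≤ ∑ i, (1/2) * ∑ m, ∑ n, Q m n * (|u i m - ubar m| * |u i n - ubar n|) :=
            Finset.sum_le_sum fun i _ => hTi i
        _ = (1/2) * ∑ i, ∑ m, ∑ n, Q m n * (|u i m - ubar m| * |u i n - ubar n|) :=
            (Finset.mul_sum _ _ _).symm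
        _ = (1/2) * ∑ m, ∑ n, Q m n * ∑ i, |u i m - ubar m| * |u i n - ubar n| := by
            rw [hswap]
        _ ≤ (1/2) * (L_G * (((J:ℝ)-1) * maxDiag Cuu)) := by
            refine mul_le_mul_of_nonneg_left hQTb (by norm_num)
    constructor
    · calc |Gbar - Gj ubar| ≤ (J:ℝ)⁻¹ * ((1/2) * (L_G * (((J:ℝ)-1) * maxDiag Cuu))) := hmain
        _ = ((J:ℝ) - 1) / (2 * (J:ℝ)) * L_G * maxDiag Cuu := by field_simp
    · have hfrac : ((J:ℝ)-1)/(2*(J:ℝ)) ≤ 1/2 := by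
        rw [div_le_div_iff₀ (by positivity) (by norm_num)]
        linarith
      exact mul_le_mul_of_nonneg_right (mul_le_mul_of_nonneg_right hfrac hLG0) hmd0
end

section
/- Jacobian approximation error of linearized localization (Lemma 5.9 of the paper): let G : ℝ^{d_u} → ℝ^{d_y} be differentiable at ū, let C ∈ ℝ^{d_u × d_u} be symmetric positive semidefinite, let Ψ ∈ ℝ^{d_u × d_u} be symmetric with nonnegative entries, set C̃ = C ∘ Ψ, and let H ∈ ℝ^{d_y × d_u}. Then the linearized localization C̃^{up} = C̃ Hᵀ satisfies ‖∇G(ū) C̃^{up} − ∇G(ū) C̃ ∇G(ū)ᵀ‖ ≤ ‖H − ∇G(ū)‖ · ‖∇G(ū)‖ · ‖C‖_max · ψ₀, where ψ₀ = max_i Σ_{j=1}^{d_u} Ψ_{i,j}. -/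
open Matrix
open scoped Matrix.Norms.L2Operator

/-- The `l₂` operator norm of a real matrix. -/
noncomputable def opNorm {m n : ℕ} (A : Matrix (Fin m) (Fin n) ℝ) : ℝ :=
  ‖LinearMap.toContinuousLinearMap (Matrix.toEuclideanLin A)‖

/-- The Jacobian matrix of `G` at `u`: `(jacobian G u) j m = ∂_{u_m} G_j(u)`. -/
noncomputable def jacobian {du dy : ℕ} (G : (Fin du → ℝ) → Fin dy → ℝ) (u : Fin du → ℝ) :
    Matrix (Fin dy) (Fin du) ℝ :=
  Matrix.of fun j m => fderiv ℝ (fun v => G v j) u (Pi.single m 1)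

lemma opNorm_eq_norm {m n : ℕ} (A : Matrix (Fin m) (Fin n) ℝ) : opNorm A = ‖A‖ := rfl

lemma opNorm_nonneg {m n : ℕ} (A : Matrix (Fin m) (Fin n) ℝ) : 0 ≤ opNorm A :=
  norm_nonneg _

lemma opNorm_mul_le {m n l : ℕ} (A : Matrix (Fin m) (Fin n) ℝ) (B : Matrix (Fin n) (Fin l) ℝ) :
    opNorm (A * B) ≤ opNorm A * opNorm B := Matrix.l2_opNorm_mul A B

lemma opNorm_transpose {m n : ℕ} (A : Matrix (Fin m) (Fin n) ℝ) : opNorm Aᵀ = opNorm A := by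
  simp only [opNorm_eq_norm]
  rw [← Matrix.conjTranspose_eq_transpose_of_trivial, Matrix.l2_opNorm_conjTranspose]

/-- Schur test: for a symmetric matrix, `‖A‖ ≤ max abs row sum`. -/
lemma opNorm_le_of_rowsum {n : ℕ} (A : Matrix (Fin n) (Fin n) ℝ) (hsym : Aᵀ = A)
    (r : ℝ) (hr : 0 ≤ r) (h : ∀ i, ∑ j, |A i j| ≤ r) : opNorm A ≤ r := by
  rw [opNorm]
  apply ContinuousLinearMap.opNorm_le_bound _ hr
  intro x
  have happ : (LinearMap.toContinuousLinearMap (Matrix.toEuclideanLin A)) x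
      = (WithLp.equiv 2 (Fin n → ℝ)).symm (A *ᵥ (WithLp.equiv 2 (Fin n → ℝ)) x) := rfl
  rw [happ]
  set v : Fin n → ℝ := (WithLp.equiv 2 (Fin n → ℝ)) x with hv
  have hnx : ‖x‖ = Real.sqrt (∑ j, v j ^ 2) := by
    rw [EuclideanSpace.norm_eq]
    congr 1
    refine Finset.sum_congr rfl fun j _ => by rw [Real.norm_eq_abs, sq_abs]; rfl
  have hnAx : ‖(WithLp.equiv 2 (Fin n → ℝ)).symm (A *ᵥ v)‖
      = Real.sqrt (∑ i, (A *ᵥ v) i ^ 2) := by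
    rw [EuclideanSpace.norm_eq]
    congr 1
    refine Finset.sum_congr rfl fun i _ => by rw [Real.norm_eq_abs, sq_abs]; rfl
  rw [hnAx, hnx]
  have key : ∑ i, (A *ᵥ v) i ^ 2 ≤ r ^ 2 * ∑ j, v j ^ 2 := by
    have step1 : ∀ i, (A *ᵥ v) i ^ 2 ≤ r * ∑ j, |A i j| * v j ^ 2 := by
      intro i
      have h1 : (A *ᵥ v) i = ∑ j, A i j * v j := rfl
      have h2 : ((∑ j, A i j * v j)) ^ 2 ≤ (∑ j, |A i j| * |v j|) ^ 2 := by
        rw [← sq_abs]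
        apply pow_le_pow_left₀ (abs_nonneg _)
        refine (Finset.abs_sum_le_sum_abs _ _).trans ?_
        exact le_of_eq (Finset.sum_congr rfl fun j _ => abs_mul _ _)
      have h3 : (∑ j, |A i j| * |v j|) ^ 2
          ≤ (∑ j, Real.sqrt |A i j| ^ 2) * ∑ j, (Real.sqrt |A i j| * |v j|) ^ 2 := by
        have := Finset.sum_mul_sq_le_sq_mul_sq Finset.univ
          (fun j => Real.sqrt |A i j|) (fun j => Real.sqrt |A i j| * |v j|)
        refine le_trans (le_of_eq ?_) this
        congr 1
        refine Finset.sum_congr rfl fun j _ => ?_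
        rw [← mul_assoc, Real.mul_self_sqrt (abs_nonneg (A i j))]
      have h4 : (∑ j, Real.sqrt |A i j| ^ 2) = ∑ j, |A i j| := by
        refine Finset.sum_congr rfl fun j _ => Real.sq_sqrt (abs_nonneg _)
      have h5 : (∑ j, (Real.sqrt |A i j| * |v j|) ^ 2) = ∑ j, |A i j| * v j ^ 2 := by
        refine Finset.sum_congr rfl fun j _ => ?_
        rw [mul_pow, Real.sq_sqrt (abs_nonneg _), sq_abs]
      have h6 : (∑ j, |A i j|) * (∑ j, |A i j| * v j ^ 2)
          ≤ r * ∑ j, |A i j| * v j ^ 2 := by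
        apply mul_le_mul_of_nonneg_right (h i)
        exact Finset.sum_nonneg fun j _ => mul_nonneg (abs_nonneg _) (sq_nonneg _)
      rw [h1]
      calc (∑ j, A i j * v j) ^ 2 ≤ (∑ j, |A i j| * |v j|) ^ 2 := h2
        _ ≤ (∑ j, Real.sqrt |A i j| ^ 2) * ∑ j, (Real.sqrt |A i j| * |v j|) ^ 2 := h3
        _ = (∑ j, |A i j|) * ∑ j, |A i j| * v j ^ 2 := by rw [h4, h5]
        _ ≤ r * ∑ j, |A i j| * v j ^ 2 := h6
    calc ∑ i, (A *ᵥ v) i ^ 2 ≤ ∑ i, r * ∑ j, |A i j| * v j ^ 2 :=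
          Finset.sum_le_sum fun i _ => step1 i
      _ = r * ∑ j, (∑ i, |A i j|) * v j ^ 2 := by
          rw [← Finset.mul_sum, Finset.sum_comm]
          congr 1
          refine Finset.sum_congr rfl fun j _ => by rw [Finset.sum_mul]
      _ ≤ r * ∑ j, r * v j ^ 2 := by
          apply mul_le_mul_of_nonneg_left _ hr
          refine Finset.sum_le_sum fun j _ => ?_
          apply mul_le_mul_of_nonneg_right _ (sq_nonneg _)
          have : ∑ i, |A i j| = ∑ i, |A j i| := by
            refine Finset.sum_congr rfl fun i _ => ?_
            have : A i j = A j i := by conv_rhs => rw [← hsym, Matrix.transpose_apply]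
            rw [this]
          rw [this]; exact h j
      _ = r ^ 2 * ∑ j, v j ^ 2 := by rw [← Finset.mul_sum]; ring
  calc Real.sqrt (∑ i, (A *ᵥ v) i ^ 2) ≤ Real.sqrt (r ^ 2 * ∑ j, v j ^ 2) :=
        Real.sqrt_le_sqrt key
    _ = r * Real.sqrt (∑ j, v j ^ 2) := by
        rw [Real.sqrt_mul (sq_nonneg r), Real.sqrt_sq hr]

lemma quadform_expand {n : ℕ} (C : Matrix (Fin n) (Fin n) ℝ) (hC : C.PosSemidef)
    (i j : Fin n) (ε : ℝ) :
    0 ≤ C i i + ε * C i j + ε * C j i + ε ^ 2 * C j j := by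
  have h := hC.dotProduct_mulVec_nonneg (show Fin n → ℝ from Pi.single i 1 + Pi.single j ε)
  simp only [star_trivial, Matrix.mulVec_add, dotProduct_add,
    add_dotProduct, single_dotProduct, Matrix.mulVec_single,
    one_mul, mul_one, Pi.smul_apply, op_smul_eq_mul, Matrix.col_apply] at h
  nlinarith [h]

lemma diag_nonneg {n : ℕ} (C : Matrix (Fin n) (Fin n) ℝ) (hC : C.PosSemidef) (i : Fin n) :
    0 ≤ C i i := by
  have h := quadform_expand C hC i i 0
  simpa using h

lemma diag_le_maxDiag {n : ℕ} (C : Matrix (Fin n) (Fin n) ℝ) (i : Fin n) :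
    C i i ≤ maxDiag C :=
  le_ciSup (f := fun k => C k k) (Set.Finite.bddAbove (Set.finite_range _)) i

lemma maxDiag_nonneg {n : ℕ} (C : Matrix (Fin n) (Fin n) ℝ) (hC : C.PosSemidef) :
    0 ≤ maxDiag C :=
  Real.iSup_nonneg (diag_nonneg C hC)

lemma abs_entry_le_maxDiag {n : ℕ} (C : Matrix (Fin n) (Fin n) ℝ) (hC : C.PosSemidef)
    (i j : Fin n) : |C i j| ≤ maxDiag C := by
  have hsym : C j i = C i j := by
    simpa using (hC.isHermitian.apply j i).symm
  have h1 := quadform_expand C hC i j 1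
  have h2 := quadform_expand C hC i j (-1)
  have hii := diag_le_maxDiag C i
  have hjj := diag_le_maxDiag C j
  rw [hsym] at h1 h2
  rw [abs_le]
  constructor <;> nlinarith

/-- **Jacobian approximation error of the linearized localization scheme**
(Lemma 5.9 of the paper).  With `C̃ = C ∘ Ψ` and `C̃^{up} = C̃ Hᵀ`,
`‖∇G C̃^{up} - ∇G C̃ ∇Gᵀ‖ ≤ ‖H - ∇G‖ ‖∇G‖ ‖C‖_max ψ₀`, where
`ψ₀ = max_i Σ_j Ψ_{i,j}`. -/
theorem jacobian_error_linearized_localization {du dy : ℕ}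
    (G : (Fin du → ℝ) → Fin dy → ℝ) (ub : Fin du → ℝ)
    (hdiff : DifferentiableAt ℝ G ub)
    (C Ψ : Matrix (Fin du) (Fin du) ℝ)
    (hC : C.PosSemidef) (hΨsymm : Ψ.IsSymm) (hΨnn : ∀ i j, 0 ≤ Ψ i j)
    (H : Matrix (Fin dy) (Fin du) ℝ)
    (ψ₀ : ℝ) (hψ₀ : ψ₀ = ⨆ i : Fin du, ∑ j, Ψ i j) :
    opNorm (jacobian G ub * (C.hadamard Ψ * Hᵀ)
        - jacobian G ub * C.hadamard Ψ * (jacobian G ub)ᵀ)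
      ≤ opNorm (H - jacobian G ub) * opNorm (jacobian G ub) * maxDiag C * ψ₀ := by
  set J := jacobian G ub
  set Ct := C.hadamard Ψ with hCt
  -- nonnegativity facts
  have hψnn : 0 ≤ ψ₀ := by
    rw [hψ₀]
    exact Real.iSup_nonneg fun i => Finset.sum_nonneg fun j _ => hΨnn i j
  have hMnn : 0 ≤ maxDiag C := maxDiag_nonneg C hC
  -- symmetry of C̃
  have hCtsym : Ctᵀ = Ct := by
    ext i j
    simp only [hCt, Matrix.transpose_apply, Matrix.hadamard_apply]
    have h1 : C j i = C i j := by simpa using (hC.isHermitian.apply j i).symm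
    have h2 : Ψ j i = Ψ i j := by
      have := hΨsymm
      rw [Matrix.IsSymm] at this
      conv_lhs => rw [← this, Matrix.transpose_apply]
    rw [h1, h2]
  -- norm bound on C̃
  have hCtnorm : opNorm Ct ≤ maxDiag C * ψ₀ := by
    apply opNorm_le_of_rowsum Ct hCtsym _ (mul_nonneg hMnn hψnn)
    intro i
    calc ∑ j, |Ct i j| ≤ ∑ j, maxDiag C * Ψ i j := by
          refine Finset.sum_le_sum fun j _ => ?_
          simp only [hCt, Matrix.hadamard_apply]
          rw [abs_mul, abs_of_nonneg (hΨnn i j)]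
          exact mul_le_mul_of_nonneg_right (abs_entry_le_maxDiag C hC i j) (hΨnn i j)
      _ = maxDiag C * ∑ j, Ψ i j := by rw [Finset.mul_sum]
      _ ≤ maxDiag C * ψ₀ := by
          apply mul_le_mul_of_nonneg_left _ hMnn
          rw [hψ₀]
          exact le_ciSup (f := fun i => ∑ j, Ψ i j)
            (Set.Finite.bddAbove (Set.finite_range _)) i
  -- factorization
  have hfac : J * (Ct * Hᵀ) - J * Ct * Jᵀ = (J * Ct) * (H - J)ᵀ := by
    rw [Matrix.transpose_sub, Matrix.mul_sub, Matrix.mul_assoc, Matrix.mul_assoc]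
  rw [hfac]
  calc opNorm ((J * Ct) * (H - J)ᵀ) ≤ opNorm (J * Ct) * opNorm (H - J)ᵀ :=
        opNorm_mul_le _ _
    _ ≤ (opNorm J * opNorm Ct) * opNorm (H - J) := by
        rw [opNorm_transpose]
        exact mul_le_mul_of_nonneg_right (opNorm_mul_le _ _) (opNorm_nonneg _)
    _ ≤ (opNorm J * (maxDiag C * ψ₀)) * opNorm (H - J) := by
        apply mul_le_mul_of_nonneg_right _ (opNorm_nonneg _)
        exact mul_le_mul_of_nonneg_left hCtnorm (opNorm_nonneg _)
    _ = opNorm (H - J) * opNorm J * maxDiag C * ψ₀ := by ring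
end

section
/- Comparison principle for the running maximum (Lemma A.2 of the paper): let x₁, …, x_n : [0,∞) → ℝ be continuously differentiable functions, and for each t let m_t = max_{1 ≤ i ≤ n} x_i(t) and let i_t be the smallest index i with x_i(t) = m_t. Let g : ℝ × [0,∞) → ℝ be continuous and suppose that for every t ≥ 0, the derivative satisfies (d/dt)x_{i_t}(t) ≤ g(x_{i_t}(t), t). Fix δ₀ > 0 and let y : [0,∞) → ℝ solve (d/dt)y_t = g(y_t, t) + δ₀ with y₀ > m₀. Then y_t > m_t for all t > 0. -/
/-- **Comparison principle for the running maximum** (Lemma A.2 of the paper).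
If, at every time `t ≥ 0`, the derivative of the coordinate attaining the running maximum
(with ties broken by the smallest index) is bounded by `g(x_{i_t}(t), t)`, and `y` is a
strict supersolution `y' = g(y,t) + δ₀` with `y₀ > max_i x_i(0)`, then `y` dominates the
running maximum for all positive times. -/
theorem comparison_principle_running_max {n : ℕ} (hn : 0 < n)
    (x : Fin n → ℝ → ℝ) (hx : ∀ i, ContDiff ℝ 1 (x i))
    (g : ℝ → ℝ → ℝ) (hg : Continuous fun p : ℝ × ℝ => g p.1 p.2)
    (hbound : ∀ t, 0 ≤ t → ∀ i : Fin n,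
      (∀ i', x i' t ≤ x i t) → (∀ i' : Fin n, x i' t = x i t → i ≤ i') →
      deriv (x i) t ≤ g (x i t) t)
    (δ₀ : ℝ) (hδ₀ : 0 < δ₀)
    (y : ℝ → ℝ) (hy : ∀ t, 0 ≤ t → HasDerivAt y (g (y t) t + δ₀) t)
    (hy0 : (⨆ i, x i 0) < y 0) :
    ∀ t, 0 < t → (⨆ i, x i t) < y t := by
  haveI : Nonempty (Fin n) := ⟨⟨0, hn⟩⟩
  have hy0' : ∀ i, x i 0 < y 0 := fun i =>
    lt_of_le_of_lt (le_ciSup (f := fun i => x i 0) (Set.Finite.bddAbove (Set.finite_range _)) i) hy0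
  have hycont : ∀ t, 0 ≤ t → ContinuousAt y t := fun t ht => (hy t ht).continuousAt
  have hxcont : ∀ i, Continuous (x i) := fun i => (hx i).continuous
  suffices H : ∀ t, 0 < t → ∀ i, x i t < y t by
    intro t ht
    obtain ⟨i, hi⟩ := exists_eq_ciSup_of_finite (f := fun i => x i t)
    rw [← hi]; exact H t ht i
  by_contra hcon
  push_neg at hcon
  obtain ⟨t₀, ht₀, i₀, hi₀⟩ := hcon
  set S : Set ℝ := {t | 0 ≤ t ∧ ∃ i, y t ≤ x i t} with hSdef
  have hS_closed : IsClosed S := by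
    have : S = ⋃ i, {t | 0 ≤ t ∧ y t ≤ x i t} := by
      ext t
      simp only [hSdef, Set.mem_setOf_eq, Set.mem_iUnion]
      exact ⟨fun ⟨h0, i, hi⟩ => ⟨i, h0, hi⟩, fun ⟨i, h0, hi⟩ => ⟨h0, i, hi⟩⟩
    rw [this]
    apply isClosed_iUnion_of_finite
    intro i
    apply IsSeqClosed.isClosed
    intro u t hu hut
    have ht0 : 0 ≤ t := ge_of_tendsto' hut fun k => (hu k).1
    refine ⟨ht0, ?_⟩
    have h1 : Filter.Tendsto (fun k => y (u k)) Filter.atTop (nhds (y t)) :=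
      ((hycont t ht0).tendsto).comp hut
    have h2 : Filter.Tendsto (fun k => x i (u k)) Filter.atTop (nhds (x i t)) :=
      ((hxcont i).continuousAt.tendsto).comp hut
    exact le_of_tendsto_of_tendsto h1 h2 (Filter.Eventually.of_forall fun k => (hu k).2)
  have hS_ne : S.Nonempty := ⟨t₀, ht₀.le, i₀, hi₀⟩
  have hSbd : BddBelow S := ⟨0, fun t ht => ht.1⟩
  set T := sInf S with hTdef
  have hTS : T ∈ S := hS_closed.csInf_mem hS_ne hSbd
  have hT0 : 0 ≤ T := hTS.1
  have hlt : ∀ t, 0 ≤ t → t < T → ∀ i, x i t < y t := by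
    intro t h1 h2 i
    by_contra h; push_neg at h
    exact absurd (csInf_le hSbd ⟨h1, i, h⟩) (not_le.2 h2)
  have hT_pos : 0 < T := by
    rcases hT0.lt_or_eq with h | h
    · exact h
    · exfalso
      obtain ⟨i, hi⟩ := hTS.2
      rw [← h] at hi
      exact absurd hi (not_le.2 (hy0' i))
  -- y T ≥ x i T for all i (limit from the left)
  have hyx : ∀ i, x i T ≤ y T := by
    intro i
    have hmem : Set.Ioo 0 T ∈ nhdsWithin T (Set.Iio T) :=
      Ioo_mem_nhdsLT_of_mem ⟨hT_pos, le_rfl⟩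
    have htend : Filter.Tendsto (fun t => y t - x i t) (nhdsWithin T (Set.Iio T))
        (nhds (y T - x i T)) :=
      (((hycont T hT0).sub (hxcont i).continuousAt).tendsto).mono_left nhdsWithin_le_nhds
    have hev : ∀ᶠ t in nhdsWithin T (Set.Iio T), 0 ≤ y t - x i t := by
      filter_upwards [hmem] with t ht
      exact sub_nonneg.2 (hlt t ht.1.le ht.2 i).le
    have := le_of_tendsto_of_tendsto tendsto_const_nhds htend hev
    linarith [sub_nonneg.1 this]
  obtain ⟨j, hj⟩ := hTS.2
  have hjeq : x j T = y T := le_antisymm (hyx j) hj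
  -- smallest index attaining the max
  set F : Finset (Fin n) := Finset.univ.filter (fun i => x i T = y T) with hFdef
  have hF_ne : F.Nonempty := ⟨j, by simp [hFdef, hjeq]⟩
  set i := F.min' hF_ne with hidef
  have hiF : x i T = y T := by
    have := F.min'_mem hF_ne
    simpa [hFdef] using this
  have hmax : ∀ i', x i' T ≤ x i T := fun i' => hiF ▸ hyx i'
  have htie : ∀ i' : Fin n, x i' T = x i T → i ≤ i' := by
    intro i' h
    exact F.min'_le i' (by simp [hFdef, h, hiF])
  have hder : deriv (x i) T ≤ g (y T) T := by
    have := hbound T hT0 i hmax htie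
    rwa [hiF] at this
  -- h := y - x i has positive derivative at T but h T = 0 and h > 0 before T
  have hxi : HasDerivAt (x i) (deriv (x i) T) T :=
    (((hx i).differentiable one_ne_zero) T).hasDerivAt
  have hh : HasDerivAt (fun t => y t - x i t) (g (y T) T + δ₀ - deriv (x i) T) T :=
    (hy T hT0).sub hxi
  set d := g (y T) T + δ₀ - deriv (x i) T with hddef
  have hd_pos : 0 < d := by rw [hddef]; linarith
  have hslope : Filter.Tendsto (slope (fun t => y t - x i t) T) (nhdsWithin T {T}ᶜ)
      (nhds d) := hasDerivAt_iff_tendsto_slope.1 hh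
  have hslope' : Filter.Tendsto (slope (fun t => y t - x i t) T) (nhdsWithin T (Set.Iio T))
      (nhds d) := hslope.mono_left (nhdsWithin_mono T (fun t ht => ne_of_lt ht))
  have hev : ∀ᶠ t in nhdsWithin T (Set.Iio T),
      0 < slope (fun t => y t - x i t) T t :=
    hslope'.eventually (eventually_gt_nhds hd_pos)
  have hmem : Set.Ioo 0 T ∈ nhdsWithin T (Set.Iio T) :=
    Ioo_mem_nhdsLT_of_mem ⟨hT_pos, le_rfl⟩
  have : ∀ᶠ t in nhdsWithin T (Set.Iio T), False := by
    filter_upwards [hev, hmem] with t hpos ht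
    have hT0' : y T - x i T = 0 := by rw [hiF]; ring
    have hslope_eq : slope (fun t => y t - x i t) T t
        = (y t - x i t) / (t - T) := by
      rw [slope_def_field]
      rw [hT0', sub_zero]
    rw [hslope_eq] at hpos
    have htT : t - T < 0 := sub_neg.2 ht.2
    have hnum : 0 < y t - x i t := sub_pos.2 (hlt t ht.1.le ht.2 i)
    have : (y t - x i t) / (t - T) < 0 := div_neg_of_pos_of_neg hnum htT
    linarith
  exact (this.exists).elim fun _ h => h
end

section
/- Riccati equation solution and decay (Lemma A.3 of the paper): fix a > 0, b ∈ ℝ and σ ≥ 0, and let c₋ < c₊ be the two real roots of the quadratic c² + c − bc = aσ. For a constant B, define y_t = [c₋(t+1)^{−c₋} + B c₊(t+1)^{−c₊}] / ( −a [ (t+1)^{1−c₋} + B (t+1)^{1−c₊} ] ) for those t ≥ 0 where the denominator is nonzero. Then y solves the Riccati equation dy/dt = −a y² − (b/(t+1)) y + σ/(t+1)² on its domain. Moreover: (1) if σ > 0 and b = 0 then c₋ < 0 < c₊, and for a solution with B ≥ 0, for every δ ∈ (0,1) there is t₀ such that for all t ≥ t₀, y_t ≤ c₋ / (−a (t+1)(1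 − δ)) = (−c₋)/(a(1−δ)(t+1)); (2) if σ = 0 and b = 0 then c₋ = −1 and c₊ = 0. -/
set_option maxHeartbeats 1000000

lemma riccati_aux_deriv (p t : ℝ) (ht : (0:ℝ) < t + 1) :
    HasDerivAt (fun u : ℝ => (u + 1) ^ p) (p * (t + 1) ^ (p - 1)) t := by
  have h := ((hasDerivAt_id t).add_const 1).rpow_const (p := p) (Or.inl ht.ne')
  simpa using h

/-- **Riccati equation solution and decay** (Lemma A.3 of the paper).
With `cm < cp` the real roots of `c² + c - bc = aσ` and
`y_t = (cm(t+1)^{-cm} + B cp (t+1)^{-cp}) / (-a((t+1)^{1-cm} + B(t+1)^{1-cp}))`,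
`y` solves the Riccati equation `y' = -a y² - (b/(t+1)) y + σ/(t+1)²` wherever the
denominator is nonzero; if `σ > 0` and `b = 0` then `cm < 0 < cp` and (for `B ≥ 0`)
`y_t ≤ cm/(-a(t+1)(1-δ))` eventually; if `σ = 0` and `b = 0` then `cm = -1`, `cp = 0`. -/
theorem riccati_solution_and_decay (a b σ : ℝ) (ha : 0 < a) (hσ : 0 ≤ σ)
    (cm cp : ℝ)
    (hcm : cm ^ 2 + cm - b * cm = a * σ)
    (hcp : cp ^ 2 + cp - b * cp = a * σ)
    (hlt : cm < cp)
    (B : ℝ) (y : ℝ → ℝ)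
    (hy : ∀ t : ℝ, y t =
      (cm * (t + 1) ^ (-cm) + B * cp * (t + 1) ^ (-cp)) /
        (-a * ((t + 1) ^ (1 - cm) + B * (t + 1) ^ (1 - cp)))) :
    (∀ t : ℝ, 0 ≤ t → (t + 1) ^ (1 - cm) + B * (t + 1) ^ (1 - cp) ≠ 0 →
      HasDerivAt y (-a * y t ^ 2 - b / (t + 1) * y t + σ / (t + 1) ^ 2) t) ∧
    (0 < σ → b = 0 →
      (cm < 0 ∧ 0 < cp) ∧
      (0 ≤ B → ∀ δ : ℝ, 0 < δ → δ < 1 →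
        ∃ t₀ : ℝ, ∀ t, t₀ ≤ t → y t ≤ cm / (-a * (t + 1) * (1 - δ)))) ∧
    (σ = 0 → b = 0 → cm = -1 ∧ cp = 0) := by
  have hsum : cm + cp = b - 1 := by
    have h : (cm - cp) * (cm + cp + 1 - b) = 0 := by linear_combination hcm - hcp
    rcases mul_eq_zero.mp h with h1 | h1
    · exact absurd (by linarith : cm = cp) hlt.ne
    · linarith
  have hprod : cm * cp = -(a * σ) := by
    have : cp = b - 1 - cm := by linarith
    rw [this]; linear_combination -hcm
  refine ⟨?_, ?_, ?_⟩
  · -- Part 1: the Riccati equation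
    intro t ht hden
    have hs : (0:ℝ) < t + 1 := by linarith
    have hyF : y = fun u => (cm * (u + 1) ^ (-cm) + B * cp * (u + 1) ^ (-cp)) /
          (-a * ((u + 1) ^ (1 - cm) + B * (u + 1) ^ (1 - cp))) := funext hy
    have hD0 : -a * ((t + 1) ^ (1 - cm) + B * (t + 1) ^ (1 - cp)) ≠ 0 :=
      mul_ne_zero (neg_ne_zero.mpr ha.ne') hden
    have hN : HasDerivAt (fun u : ℝ => cm * (u + 1) ^ (-cm) + B * cp * (u + 1) ^ (-cp))
        (cm * (-cm * (t + 1) ^ (-cm - 1)) + B * cp * (-cp * (t + 1) ^ (-cp - 1))) t :=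
      ((riccati_aux_deriv (-cm) t hs).const_mul cm).add
        ((riccati_aux_deriv (-cp) t hs).const_mul (B * cp))
    have hD : HasDerivAt (fun u : ℝ => -a * ((u + 1) ^ (1 - cm) + B * (u + 1) ^ (1 - cp)))
        (-a * ((1 - cm) * (t + 1) ^ (1 - cm - 1) + B * ((1 - cp) * (t + 1) ^ (1 - cp - 1)))) t :=
      ((riccati_aux_deriv (1 - cm) t hs).add
        ((riccati_aux_deriv (1 - cp) t hs).const_mul B)).const_mul (-a)
    have hdiv := hN.div hD hD0
    rw [hyF]
    refine hdiv.congr_deriv (Eq.symm ?_)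
    beta_reduce
    set s := t + 1 with hsdef
    have hs0 : s ≠ 0 := hs.ne'
    have hP : s ^ (1 - cm) = s * s ^ (-cm) := by
      rw [show (1:ℝ) - cm = 1 + (-cm) by ring, Real.rpow_add hs, Real.rpow_one]
    have hQ : s ^ (1 - cp) = s * s ^ (-cp) := by
      rw [show (1:ℝ) - cp = 1 + (-cp) by ring, Real.rpow_add hs, Real.rpow_one]
    have hP2 : s ^ (-cm - 1) = s ^ (-cm) / s := by
      rw [Real.rpow_sub hs, Real.rpow_one]
    have hQ2 : s ^ (-cp - 1) = s ^ (-cp) / s := by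
      rw [Real.rpow_sub hs, Real.rpow_one]
    have hP3 : s ^ (1 - cm - 1) = s ^ (-cm) := by norm_num
    have hQ3 : s ^ (1 - cp - 1) = s ^ (-cp) := by norm_num
    rw [hP, hQ, hP2, hQ2, hP3, hQ3]
    set P := s ^ (-cm) with hPdef
    set Q := s ^ (-cp) with hQdef
    set n : ℝ := cm * P + B * cp * Q with hn
    set d : ℝ := -a * (s * P + B * (s * Q)) with hd
    set n' : ℝ := cm * (-cm * (P / s)) + B * cp * (-cp * (Q / s)) with hn'
    set d' : ℝ := -a * ((1 - cm) * P + B * ((1 - cp) * Q)) with hd'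
    have hdne : d ≠ 0 := by
      rw [hd]
      have h1 : s * P + B * (s * Q) ≠ 0 := by
        rw [hP, hQ] at hden; exact hden
      exact mul_ne_zero (neg_ne_zero.mpr ha.ne') h1
    have hn's : n' * s = -(cm * cm * P + B * cp * cp * Q) := by
      rw [hn']; field_simp; ring
    have e1 : (n' * d - n * d') / d ^ 2 = ((n' * s) * d * s - n * d' * s ^ 2) / (s ^ 2 * d ^ 2) := by
      field_simp
    have e2 : -a * (n / d) ^ 2 - b / s * (n / d) + σ / s ^ 2
        = (-a * n ^ 2 * s ^ 2 - b * s * (n * d) + σ * d ^ 2) / (s ^ 2 * d ^ 2) := by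
      field_simp
    rw [e1, e2, hn's]
    congr 1
    rw [hn, hd, hd']
    linear_combination (-(a * s^2) * (P^2 + B*P*Q)) * hcm + (-(a * s^2) * (B*P*Q + B^2*Q^2)) * hcp
  · -- Part 2: σ > 0, b = 0
    intro hσpos hb
    have hcmneg : cm < 0 ∧ 0 < cp := by
      have hp : cm * cp < 0 := by
        rw [hprod]; exact neg_neg_of_pos (mul_pos ha hσpos) |>.trans_le le_rfl
      constructor
      · by_contra h; push_neg at h
        have : 0 < cp := lt_of_le_of_lt h hlt
        nlinarith
      · by_contra h; push_neg at h
        have : cm < 0 := hlt.trans_le h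
        nlinarith
    refine ⟨hcmneg, ?_⟩
    intro hB δ hδ0 hδ1
    obtain ⟨hcm0, hcp0⟩ := hcmneg
    refine ⟨0, fun t htt => ?_⟩
    have hs : (0:ℝ) < t + 1 := by linarith
    set s := t + 1 with hsdef
    have hP : (0:ℝ) < s ^ (1 - cm) := Real.rpow_pos_of_pos hs _
    have hQ : (0:ℝ) < s ^ (1 - cp) := Real.rpow_pos_of_pos hs _
    have hPm : (0:ℝ) < s ^ (-cm) := Real.rpow_pos_of_pos hs _
    have hQm : (0:ℝ) < s ^ (-cp) := Real.rpow_pos_of_pos hs _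
    have hsum' : (0:ℝ) < s ^ (1 - cm) + B * s ^ (1 - cp) := by positivity
    have hDneg : -a * (s ^ (1 - cm) + B * s ^ (1 - cp)) < 0 := by
      apply mul_neg_of_neg_of_pos (by linarith) hsum'
    rw [hy t, ← hsdef]
    rw [div_le_iff_of_neg hDneg]
    have hRneg : -a * s * (1 - δ) < 0 := by
      have := mul_pos (mul_pos ha hs) (by linarith : (0:ℝ) < 1 - δ); linarith
    rw [div_mul_eq_mul_div, div_le_iff_of_neg hRneg]
    have hPrel : s ^ (1 - cm) = s * s ^ (-cm) := by
      rw [show (1:ℝ) - cm = 1 + (-cm) by ring, Real.rpow_add hs, Real.rpow_one]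
    have hQrel : s ^ (1 - cp) = s * s ^ (-cp) := by
      rw [show (1:ℝ) - cp = 1 + (-cp) by ring, Real.rpow_add hs, Real.rpow_one]
    rw [hPrel, hQrel]
    set P := s ^ (-cm)
    set Q := s ^ (-cp)
    have hc : (0:ℝ) ≤ (1 - δ) * cp - cm := by nlinarith
    have key : (0:ℝ) ≤ -(δ * cm) * P + B * Q * ((1 - δ) * cp - cm) := by
      have k1 : (0:ℝ) ≤ -(δ * cm) * P :=
        mul_nonneg (by nlinarith) hPm.le
      have k2 : (0:ℝ) ≤ B * Q * ((1 - δ) * cp - cm) :=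
        mul_nonneg (mul_nonneg hB hQm.le) hc
      linarith
    nlinarith [mul_nonneg (mul_pos ha hs).le key]
  · -- Part 3: σ = 0, b = 0
    intro hσ0 hb
    subst hσ0 hb
    constructor
    · have h : cm * (cm + 1) = 0 := by linear_combination hcm
      rcases mul_eq_zero.mp h with h1 | h1
      · exfalso
        have h2 : cp * (cp + 1) = 0 := by linear_combination hcp
        rcases mul_eq_zero.mp h2 with h3 | h3
        · exact hlt.ne (h1.trans h3.symm)
        · subst h1; nlinarith
      · linarith
    · have h2 : cp * (cp + 1) = 0 := by linear_combination hcp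
      rcases mul_eq_zero.mp h2 with h3 | h3
      · exact h3
      · exfalso
        have h : cm * (cm + 1) = 0 := by linear_combination hcm
        rcases mul_eq_zero.mp h with h1 | h1
        · nlinarith
        · nlinarith
end

section
/- Gronwall-type decay estimate (Lemma A.4 of the paper): fix α > 0, β ≥ 0, γ > 0 with γ ≠ α, M ≥ 0 and t₀ ≥ 0. Let x : [0,∞) → ℝ be continuously differentiable with x₀ ≥ 0, and let a, b : [0,∞) → ℝ satisfy dx/dt ≤ −a_t x_t + b_t for all t, where a_t ≥ −β for t < t₀, a_t ≥ α/(1+t) for t ≥ t₀, b_t ≤ M for t < t₀, and b_t ≤ M/(1+t)^{1+γ} for t ≥ t₀. Then there exists a constant K, depending only on α, β, γ and t₀ (but not on t, M or x₀), such that for all t ≥ 0: x_t ≤ K (x₀ + M)/(t+1)^{min{γ, α}}. -/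
open Real Set

set_option maxHeartbeats 2000000 in
/-- **Gronwall-type decay estimate** (Lemma A.4 of the paper).
If `x' ≤ -a_t x + b_t` with `a_t ≥ -β` and `b_t ≤ M` before time `t₀`, and
`a_t ≥ α/(1+t)`, `b_t ≤ M/(1+t)^{1+γ}` after time `t₀`, then
`x_t ≤ K (x₀ + M)/(t+1)^{min{γ,α}}` for a constant `K` depending only on
`α, β, γ, t₀` (in particular not on `t`, `M`, or `x₀`). -/
theorem gronwall_type_decay (α β γ t₀ : ℝ)
    (hα : 0 < α) (hβ : 0 ≤ β) (hγ : 0 < γ) (hne : γ ≠ α) (ht₀ : 0 ≤ t₀) :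
    ∃ K : ℝ, ∀ M : ℝ, 0 ≤ M → ∀ x a b : ℝ → ℝ,
      ContDiff ℝ 1 x → 0 ≤ x 0 →
      (∀ t, 0 ≤ t → deriv x t ≤ -a t * x t + b t) →
      (∀ t, 0 ≤ t → t < t₀ → -β ≤ a t) →
      (∀ t, t₀ ≤ t → α / (1 + t) ≤ a t) →
      (∀ t, 0 ≤ t → t < t₀ → b t ≤ M) →
      (∀ t, t₀ ≤ t → b t ≤ M / (1 + t) ^ (1 + γ)) →
      ∀ t, 0 ≤ t → x t ≤ K * (x 0 + M) / (t + 1) ^ min γ α := by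
  set m : ℝ := min γ α with hm
  set c₀ : ℝ := 1 + |α - γ|⁻¹ with hc₀
  set u₀ : ℝ := 1 + t₀ with hu₀
  set e : ℝ := Real.exp ((β + 1) * t₀) with he
  have hαγ : α - γ ≠ 0 := sub_ne_zero.mpr hne.symm
  have hm_pos : 0 < m := lt_min hγ hα
  have hmα : m ≤ α := by rw [hm]; exact min_le_right γ α
  have hmγ : m ≤ γ := by rw [hm]; exact min_le_left γ α
  have hc₀1 : 1 ≤ c₀ := le_add_of_nonneg_right (inv_nonneg.mpr (abs_nonneg _))
  have hc₀inv : |α - γ|⁻¹ ≤ c₀ := le_add_of_nonneg_left zero_le_one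
  have hu₀1 : 1 ≤ u₀ := by rw [hu₀]; linarith
  have hu₀0 : 0 < u₀ := by linarith
  have he1 : 1 ≤ e := Real.one_le_exp (by nlinarith)
  refine ⟨3 * c₀ * e * u₀ ^ (γ + α), ?_⟩
  intro M hM x a b hx hx0 hode ha1 ha2 hb1 hb2 t ht
  have hxd : Differentiable ℝ x := hx.differentiable one_ne_zero
  set S : ℝ := x 0 + M with hS
  have hS0 : 0 ≤ S := add_nonneg hx0 hM
  have hMS : M ≤ S := by rw [hS]; linarith
  set D : ℝ := M / (α - γ) with hD
  have hDM : (α - γ) * D = M := by rw [hD]; field_simp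
  have hDabs : |D| ≤ c₀ * S := by
    rw [hD, abs_div, abs_of_nonneg hM, div_eq_mul_inv]
    calc M * |α - γ|⁻¹ ≤ S * c₀ :=
          mul_le_mul hMS hc₀inv (inv_nonneg.mpr (abs_nonneg _)) hS0
      _ = c₀ * S := mul_comm _ _
  set E : ℝ := e * u₀ ^ m + 1 with hE
  have hu₀m1 : 1 ≤ u₀ ^ m := by
    calc (1:ℝ) = u₀ ^ (0:ℝ) := (Real.rpow_zero u₀).symm
      _ ≤ u₀ ^ m := Real.rpow_le_rpow_of_exponent_le hu₀1 hm_pos.le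
  have hEpos : 0 < E := by
    rw [hE]
    have := mul_nonneg (show (0:ℝ) ≤ e by linarith only [he1]) (by linarith only [hu₀m1] : (0:ℝ) ≤ u₀ ^ m)
    linarith only [this]
  have hu₀γ : u₀ ^ (-γ) ≤ 1 := Real.rpow_le_one_of_one_le_of_nonpos hu₀1 (by linarith)
  have hu₀γ0 : 0 < u₀ ^ (-γ) := Real.rpow_pos_of_pos hu₀0 _
  have hcSe : c₀ * S ≤ c₀ * S * e :=
    le_mul_of_one_le_right (mul_nonneg (by linarith only [hc₀1]) hS0) he1
  have hDcSe : |D| ≤ c₀ * S * e := hDabs.trans hcSe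
  -- main ε-perturbed estimate
  have key : ∀ ε > 0, x t ≤ 3 * c₀ * e * u₀ ^ (γ + α) * S * (1 + t) ^ (-m) + ε * E := by
    intro ε hε
    have hPS : 0 < c₀ * S + ε := by
      have := mul_nonneg (show (0:ℝ) ≤ c₀ by linarith only [hc₀1]) hS0
      linarith only [this, hε]
    -- Stage 1 : on [0, t₀]
    have stage1 : ∀ s ∈ Icc (0:ℝ) t₀, x s ≤ (c₀ * S + ε) * Real.exp ((β + 1) * s) := by
      refine image_le_of_deriv_right_lt_deriv_boundary' (f := x) (f' := deriv x)
        (B := fun s => (c₀ * S + ε) * Real.exp ((β + 1) * s))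
        (B' := fun s => (c₀ * S + ε) * (Real.exp ((β + 1) * s) * ((β + 1) * 1)))
        hxd.continuous.continuousOn
        (fun r _ => (hxd r).hasDerivAt.hasDerivWithinAt) ?_ ?_ ?_ ?_
      · simp only [mul_zero, Real.exp_zero, mul_one]
        have h0 : 0 ≤ (c₀ - 1) * S := mul_nonneg (sub_nonneg.2 hc₀1) hS0
        have h1 : x 0 ≤ S := by rw [hS]; linarith only [hM]
        linarith only [h0, h1, hε]
      · exact (Continuous.continuousOn (by fun_prop))
      · intro r _
        exact (((hasDerivAt_id r).const_mul (β + 1)).exp.const_mul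
          (c₀ * S + ε)).hasDerivWithinAt
      · intro r hr hcontact'
        have hcontact : x r = (c₀ * S + ε) * Real.exp ((β + 1) * r) := hcontact'
        have h0r : 0 ≤ r := hr.1
        have hexp1 : 1 ≤ Real.exp ((β + 1) * r) := Real.one_le_exp (by nlinarith)
        have hexp0 : 0 < Real.exp ((β + 1) * r) := Real.exp_pos _
        have hBr : 0 ≤ x r := by rw [hcontact]; positivity
        have h1 : deriv x r ≤ -a r * x r + b r := hode r h0r
        rw [hcontact] at h1
        have h2 : -a r * ((c₀ * S + ε) * Real.exp ((β + 1) * r)) ≤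
            β * ((c₀ * S + ε) * Real.exp ((β + 1) * r)) :=
          mul_le_mul_of_nonneg_right (by linarith [ha1 r h0r hr.2]) (hcontact ▸ hBr)
        have h3 : b r ≤ M := hb1 r h0r hr.2
        have hMB : M < (c₀ * S + ε) * Real.exp ((β + 1) * r) := by
          have h4 : 0 ≤ (c₀ - 1) * S := mul_nonneg (sub_nonneg.2 hc₀1) hS0
          have h5 : 0 ≤ (c₀ * S + ε) * (Real.exp ((β + 1) * r) - 1) :=
            mul_nonneg hPS.le (by linarith only [hexp1])
          linarith only [h4, h5, hMS, hε]
        calc deriv x r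
            ≤ -a r * ((c₀ * S + ε) * Real.exp ((β + 1) * r)) + b r := h1
          _ ≤ β * ((c₀ * S + ε) * Real.exp ((β + 1) * r)) + M := by linarith
          _ < (c₀ * S + ε) * (Real.exp ((β + 1) * r) * ((β + 1) * 1)) := by
              linarith only [hMB]
    rcases le_or_gt t t₀ with htc | htc
    · -- the easy region t ≤ t₀
      have h1 := stage1 t ⟨ht, htc⟩
      have hu1 : (1:ℝ) ≤ 1 + t := by linarith
      have huu₀ : 1 + t ≤ u₀ := by rw [hu₀]; linarith
      have hexp : Real.exp ((β + 1) * t) ≤ e := by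
        rw [he]
        exact Real.exp_le_exp.mpr (by
          linarith only [mul_nonneg (show (0:ℝ) ≤ β + 1 by linarith only [hβ])
            (sub_nonneg.2 htc)])
      have hum : u₀ ^ (-m) ≤ (1 + t) ^ (-m) := by
        rw [Real.rpow_neg hu₀0.le, Real.rpow_neg (by linarith : (0:ℝ) ≤ 1 + t)]
        exact inv_anti₀ (Real.rpow_pos_of_pos (by linarith) m)
          (Real.rpow_le_rpow (by linarith) huu₀ hm_pos.le)
      have hK0 : c₀ * S * e ≤ 3 * c₀ * e * u₀ ^ (γ + α) * S * (1 + t) ^ (-m) := by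
        have h2 : (1:ℝ) ≤ u₀ ^ (γ + α) * u₀ ^ (-m) := by
          rw [← Real.rpow_add hu₀0]
          calc (1:ℝ) = u₀ ^ (0:ℝ) := (Real.rpow_zero u₀).symm
            _ ≤ u₀ ^ (γ + α + -m) := Real.rpow_le_rpow_of_exponent_le hu₀1 (by linarith)
        have h3 : u₀ ^ (γ + α) * u₀ ^ (-m) ≤ u₀ ^ (γ + α) * (1 + t) ^ (-m) :=
          mul_le_mul_of_nonneg_left hum (Real.rpow_pos_of_pos hu₀0 _).le
        have hcSe0 : (0:ℝ) ≤ c₀ * S * e :=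
          mul_nonneg (mul_nonneg (by linarith only [hc₀1] : (0:ℝ) ≤ c₀) hS0)
            (by linarith only [he1] : (0:ℝ) ≤ e)
        have h10 : c₀ * S * e ≤ c₀ * S * e * (u₀ ^ (γ + α) * (1 + t) ^ (-m)) :=
          le_mul_of_one_le_right hcSe0 (h2.trans h3)
        have h11 : 3 * c₀ * e * u₀ ^ (γ + α) * S * (1 + t) ^ (-m)
            = 3 * (c₀ * S * e * (u₀ ^ (γ + α) * (1 + t) ^ (-m))) := by ring
        rw [h11]
        linarith only [h10, hcSe0]
      have heE : e ≤ E := by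
        have h12 : e ≤ e * u₀ ^ m :=
          le_mul_of_one_le_right (by linarith only [he1]) hu₀m1
        rw [hE]; linarith only [h12]
      calc x t ≤ (c₀ * S + ε) * Real.exp ((β + 1) * t) := h1
        _ ≤ (c₀ * S + ε) * e := mul_le_mul_of_nonneg_left hexp hPS.le
        _ = c₀ * S * e + ε * e := by ring
        _ ≤ 3 * c₀ * e * u₀ ^ (γ + α) * S * (1 + t) ^ (-m) + ε * E := by
            linarith only [hK0, mul_le_mul_of_nonneg_left heE hε.le]
    · -- the region t > t₀
      have hxt₀ : x t₀ ≤ (c₀ * S + ε) * e := stage1 t₀ ⟨ht₀, le_rfl⟩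
      set Pε : ℝ := (c₀ * S + ε) * e with hPε
      set Cε : ℝ := (Pε - D * u₀ ^ (-γ)) * u₀ ^ m with hCε
      have hPε0 : 0 < Pε := by
        rw [hPε]; exact mul_pos hPS (by linarith only [he1])
      have hDu : D * u₀ ^ (-γ) ≤ |D| := by
        calc D * u₀ ^ (-γ) ≤ |D| * u₀ ^ (-γ) :=
              mul_le_mul_of_nonneg_right (le_abs_self D) hu₀γ0.le
          _ ≤ |D| * 1 := mul_le_mul_of_nonneg_left hu₀γ (abs_nonneg D)
          _ = |D| := mul_one _
      have hDPε : |D| ≤ Pε := by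
        rw [hPε]
        have h13 : 0 ≤ ε * e := mul_nonneg hε.le (by linarith only [he1])
        linarith only [hDcSe, h13]
      have hCε0 : 0 ≤ Cε :=
        mul_nonneg (by linarith) (Real.rpow_pos_of_pos hu₀0 m).le
      have hcancel : u₀ ^ m * u₀ ^ (-m) = 1 := by
        rw [← Real.rpow_add hu₀0]; simp
      have stage2 : ∀ s ∈ Icc t₀ t, x s ≤
          Cε * (1+s) ^ (-m) + D * (1+s) ^ (-γ) + ε * (1+s) ^ (-(m/2)) := by
        refine image_le_of_deriv_right_lt_deriv_boundary' (f := x) (f' := deriv x)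
          (B := fun s => Cε * (1+s) ^ (-m) + D * (1+s) ^ (-γ) + ε * (1+s) ^ (-(m/2)))
          (B' := fun s => Cε * (1 * -m * (1+s) ^ (-m - 1)) + D * (1 * -γ * (1+s) ^ (-γ - 1))
            + ε * (1 * -(m/2) * (1+s) ^ (-(m/2) - 1)))
          hxd.continuous.continuousOn
          (fun r _ => (hxd r).hasDerivAt.hasDerivWithinAt) ?_ ?_ ?_ ?_
        · -- x t₀ ≤ B t₀
          have h1 : Cε * (1+t₀) ^ (-m) + D * (1+t₀) ^ (-γ) = Pε := by
            rw [← hu₀, hCε]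
            linear_combination (Pε - D * u₀ ^ (-γ)) * hcancel
          have h2 : 0 ≤ ε * (1+t₀) ^ (-(m/2)) :=
            mul_nonneg hε.le (Real.rpow_pos_of_pos (by linarith) _).le
          show x t₀ ≤ Cε * (1+t₀) ^ (-m) + D * (1+t₀) ^ (-γ) + ε * (1+t₀) ^ (-(m/2))
          rw [hPε] at h1
          linarith
        · -- continuity of the barrier
          intro s hs
          have hs0 : (0:ℝ) < 1 + s := by have := hs.1; linarith
          have hcs : ∀ p : ℝ, ContinuousWithinAt (fun y : ℝ => (1+y) ^ p) (Icc t₀ t) s := by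
            intro p
            exact ((Real.continuousAt_rpow_const _ p (Or.inl hs0.ne')).comp
              ((continuous_const.add continuous_id).continuousAt)).continuousWithinAt
          exact ((continuousWithinAt_const.mul (hcs (-m))).add
            (continuousWithinAt_const.mul (hcs (-γ)))).add
            (continuousWithinAt_const.mul (hcs (-(m/2))))
        · -- differentiability of the barrier
          intro s hs
          have hs0 : (0:ℝ) < 1 + s := by have := hs.1; linarith
          have hd : ∀ p : ℝ, HasDerivAt (fun y : ℝ => (1+y) ^ p) (1 * p * (1+s) ^ (p-1)) s :=
            fun p => HasDerivAt.rpow_const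
              (show HasDerivAt (fun y : ℝ => 1 + y) 1 s from (hasDerivAt_id s).const_add 1)
              (Or.inl hs0.ne')
          exact ((((hd (-m)).const_mul Cε).add ((hd (-γ)).const_mul D)).add
            ((hd (-(m/2))).const_mul ε)).hasDerivWithinAt
        · -- the contact-point derivative inequality
          intro r hr hcon'
          have hrt₀ : t₀ ≤ r := hr.1
          have h0r : 0 ≤ r := le_trans ht₀ hrt₀
          have hu0 : (0:ℝ) < 1 + r := by linarith
          have hu1 : (1:ℝ) ≤ 1 + r := by linarith
          have hu₀u : u₀ ≤ 1 + r := by rw [hu₀]; linarith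
          have hcon : x r = Cε * (1+r) ^ (-m) + D * (1+r) ^ (-γ) + ε * (1+r) ^ (-(m/2)) :=
            hcon'
          have e1 : (1+r) ^ (-m) = (1+r) ^ (γ - m) * (1+r) ^ (-γ) := by
            rw [← Real.rpow_add hu0]; congr 1; ring
          have e2 : Cε * u₀ ^ (γ - m) + D = Pε * u₀ ^ γ := by
            rw [hCε]
            have c1 : u₀ ^ m * u₀ ^ (γ - m) = u₀ ^ γ := by
              rw [← Real.rpow_add hu₀0]; congr 1; ring
            have c2 : u₀ ^ (-γ) * u₀ ^ γ = 1 := by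
              rw [← Real.rpow_add hu₀0]; simp
            linear_combination (Pε - D * u₀ ^ (-γ)) * c1 - D * c2
          have h3 : Cε * u₀ ^ (γ - m) ≤ Cε * (1+r) ^ (γ - m) :=
            mul_le_mul_of_nonneg_left (Real.rpow_le_rpow hu₀0.le hu₀u (by linarith)) hCε0
          have h4 : 0 ≤ Pε * u₀ ^ γ :=
            mul_nonneg hPε0.le (Real.rpow_pos_of_pos hu₀0 γ).le
          have hBpos : 0 ≤ Cε * (1+r) ^ (-m) + D * (1+r) ^ (-γ) := by
            calc (0:ℝ) ≤ (Cε * (1+r) ^ (γ - m) + D) * (1+r) ^ (-γ) :=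
                  mul_nonneg (by linarith) (Real.rpow_pos_of_pos hu0 _).le
              _ = Cε * (1+r) ^ (-m) + D * (1+r) ^ (-γ) := by rw [e1]; ring
          have hBr0 : 0 ≤ x r := by
            rw [hcon]
            have h5 : 0 ≤ ε * (1+r) ^ (-(m/2)) :=
              mul_nonneg hε.le (Real.rpow_pos_of_pos hu0 _).le
            linarith
          have h1 : deriv x r ≤ -a r * x r + b r := hode r h0r
          have h2 : -a r * x r ≤ -(α / (1+r)) * x r :=
            mul_le_mul_of_nonneg_right (neg_le_neg (ha2 r hrt₀)) hBr0
          have h3' : b r ≤ M * (1+r) ^ (-γ - 1) := by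
            have hb := hb2 r hrt₀
            have e3 : M / (1+r) ^ (1+γ) = M * (1+r) ^ (-γ - 1) := by
              rw [div_eq_mul_inv, ← Real.rpow_neg hu0.le]
              congr 2
              ring
            rw [e3] at hb
            exact hb
          have s1 : (1+r) ^ (-m) = (1+r) ^ (-m - 1) * (1+r) := by
            rw [← Real.rpow_add_one hu0.ne']; congr 1; ring
          have s2 : (1+r) ^ (-γ) = (1+r) ^ (-γ - 1) * (1+r) := by
            rw [← Real.rpow_add_one hu0.ne']; congr 1; ring
          have s3 : (1+r) ^ (-(m/2)) = (1+r) ^ (-(m/2) - 1) * (1+r) := by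
            rw [← Real.rpow_add_one hu0.ne']; congr 1; ring
          have hA1 : (0:ℝ) < (1+r) ^ (-m - 1) := Real.rpow_pos_of_pos hu0 _
          have hA3 : (0:ℝ) < (1+r) ^ (-(m/2) - 1) := Real.rpow_pos_of_pos hu0 _
          have e4 : -(α / (1+r)) * x r + M * (1+r) ^ (-γ - 1)
              = -α * Cε * (1+r) ^ (-m-1) - α * D * (1+r) ^ (-γ-1)
                - α * ε * (1+r) ^ (-(m/2)-1) + M * (1+r) ^ (-γ-1) := by
            rw [hcon, s1, s2, s3]
            field_simp
            ring
          have hDM' : (α - γ) * D * (1+r) ^ (-γ-1) = M * (1+r) ^ (-γ-1) := by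
            rw [hDM]
          have hint1 : 0 ≤ (α - m) * Cε * ((1+r) ^ (-m-1)) :=
            mul_nonneg (mul_nonneg (by linarith) hCε0) hA1.le
          have hint2 : 0 < (α - m/2) * ε * ((1+r) ^ (-(m/2)-1)) :=
            mul_pos (mul_pos (by linarith) hε) hA3
          calc deriv x r ≤ -a r * x r + b r := h1
            _ ≤ -(α / (1+r)) * x r + M * (1+r) ^ (-γ - 1) := by linarith
            _ = -α * Cε * (1+r) ^ (-m-1) - α * D * (1+r) ^ (-γ-1)
                - α * ε * (1+r) ^ (-(m/2)-1) + M * (1+r) ^ (-γ-1) := e4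
            _ < Cε * (1 * -m * (1+r) ^ (-m - 1)) + D * (1 * -γ * (1+r) ^ (-γ - 1))
                + ε * (1 * -(m/2) * (1+r) ^ (-(m/2) - 1)) := by
                linarith only [hint1, hint2, hDM']
      -- use the barrier at time t
      have hxt := stage2 t ⟨htc.le, le_rfl⟩
      have hu1 : (1:ℝ) ≤ 1 + t := by linarith
      have hu0 : (0:ℝ) < 1 + t := by linarith
      have hum0 : (0:ℝ) < (1+t) ^ (-m) := Real.rpow_pos_of_pos hu0 _
      have hcSe0 : (0:ℝ) ≤ c₀ * S * e :=
        mul_nonneg (mul_nonneg (by linarith only [hc₀1] : (0:ℝ) ≤ c₀) hS0)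
          (by linarith only [he1] : (0:ℝ) ≤ e)
      have b1 : D * (1+t) ^ (-γ) ≤ |D| * (1+t) ^ (-m) := by
        calc D * (1+t) ^ (-γ) ≤ |D| * (1+t) ^ (-γ) :=
              mul_le_mul_of_nonneg_right (le_abs_self D) (Real.rpow_pos_of_pos hu0 _).le
          _ ≤ |D| * (1+t) ^ (-m) := mul_le_mul_of_nonneg_left
              (Real.rpow_le_rpow_of_exponent_le hu1 (by linarith)) (abs_nonneg D)
      have b2 : Cε ≤ 2 * (c₀ * S * e) * u₀ ^ m + ε * e * u₀ ^ m := by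
        have h6 : Pε - D * u₀ ^ (-γ) ≤ 2 * (c₀ * S * e) + ε * e := by
          have h7 : -(D * u₀ ^ (-γ)) ≤ |D| := by
            have := abs_mul D (u₀ ^ (-γ))
            have h8 : |D * u₀ ^ (-γ)| ≤ |D| := by
              rw [abs_mul, abs_of_pos hu₀γ0]
              nlinarith [abs_nonneg D]
            linarith [neg_abs_le (D * u₀ ^ (-γ)), abs_le.mp h8]
          rw [hPε]
          have h14 : (c₀ * S + ε) * e = c₀ * S * e + ε * e := by ring
          linarith only [h7, hDcSe, h14]
        calc Cε = (Pε - D * u₀ ^ (-γ)) * u₀ ^ m := hCε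
          _ ≤ (2 * (c₀ * S * e) + ε * e) * u₀ ^ m :=
              mul_le_mul_of_nonneg_right h6 (Real.rpow_pos_of_pos hu₀0 m).le
          _ = 2 * (c₀ * S * e) * u₀ ^ m + ε * e * u₀ ^ m := by ring
      have hA : Cε * (1+t) ^ (-m) ≤ (2 * (c₀ * S * e) * u₀ ^ m + ε * e * u₀ ^ m) * (1+t) ^ (-m) :=
        mul_le_mul_of_nonneg_right b2 hum0.le
      have hB2 : |D| * (1+t) ^ (-m) ≤ c₀ * S * e * u₀ ^ m * (1+t) ^ (-m) :=
        mul_le_mul_of_nonneg_right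
          (hDcSe.trans (le_mul_of_one_le_right hcSe0 hu₀m1)) hum0.le
      have hup : u₀ ^ m ≤ u₀ ^ (γ + α) := Real.rpow_le_rpow_of_exponent_le hu₀1 (by linarith)
      have hC : c₀ * S * e * u₀ ^ m * (1+t) ^ (-m) ≤ c₀ * S * e * u₀ ^ (γ + α) * (1+t) ^ (-m) :=
        mul_le_mul_of_nonneg_right (mul_le_mul_of_nonneg_left hup hcSe0) hum0.le
      have h1t : (1+t) ^ (-m) ≤ 1 := Real.rpow_le_one_of_one_le_of_nonpos hu1 (by linarith)
      have h1t2 : (1+t) ^ (-(m/2)) ≤ 1 := Real.rpow_le_one_of_one_le_of_nonpos hu1 (by linarith)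
      have hD1 : ε * (e * u₀ ^ m * (1+t) ^ (-m)) ≤ ε * (e * u₀ ^ m) :=
        mul_le_mul_of_nonneg_left
          (mul_le_of_le_one_right
            (mul_nonneg (by linarith only [he1]) (by linarith only [hu₀m1])) h1t) hε.le
      have hD2 : ε * (1+t) ^ (-(m/2)) ≤ ε * 1 := mul_le_mul_of_nonneg_left h1t2 hε.le
      have hEε : ε * E = ε * (e * u₀ ^ m) + ε := by rw [hE]; ring
      clear_value Cε Pε D S E m c₀ u₀ e
      calc x t ≤ Cε * (1+t) ^ (-m) + D * (1+t) ^ (-γ) + ε * (1+t) ^ (-(m/2)) := hxt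
        _ ≤ 3 * c₀ * e * u₀ ^ (γ + α) * S * (1 + t) ^ (-m) + ε * E := by
            linarith only [hA, b1, hB2, hC, hD1, hD2, hEε]
  -- pass to the limit ε → 0
  set A : ℝ := 3 * c₀ * e * u₀ ^ (γ + α) * S * (1 + t) ^ (-m) with hA
  have main : x t ≤ A := by
    by_contra hlt
    push_neg at hlt
    have hδ : 0 < (x t - A) / 2 := by linarith
    have h := key (((x t - A) / 2) / E) (div_pos hδ hEpos)
    rw [div_mul_cancel₀ _ hEpos.ne'] at h
    linarith
  have hbase : (0:ℝ) < t + 1 := by linarith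
  calc x t ≤ A := main
    _ = 3 * c₀ * e * u₀ ^ (γ + α) * (x 0 + M) / (t + 1) ^ m := by
        rw [hA, hS, show (1:ℝ) + t = t + 1 by ring, Real.rpow_neg hbase.le, div_eq_mul_inv]
end

section
/- Existence of localized weight vectors (Lemma A.5 of the paper): let φ ∈ ℝ^{d × d} be a symmetric matrix with nonnegative entries and zero diagonal, and suppose there is φ₀ with 0 < φ₀ < 1 such that Σ_{j=1}^d φ_{i,j} ≤ 1 − φ₀ for all i. Then for every index i ∈ {1,…,d} there exists a vector v^i ∈ ℝ^d with the following three properties: (1) v^i_j ≥ 0 for all j, and v^i_i ≥ φ₀; (2) for every index j, Σ_{l ≠ j} φ_{j,l} v^i_l ≤ v^i_j; (3) Σ_{j=1}^d v^i_j ≤ 1. -/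
open Matrix

/-- **Existence of localized weight vectors** (Lemma A.5 of the paper).
For a symmetric matrix `φ` with nonnegative entries, zero diagonal and row sums at most
`1 - φ₀`, for every index `i` there is a nonnegative weight vector `v` with `v_i ≥ φ₀`,
`Σ_{l ≠ j} φ_{j,l} v_l ≤ v_j` for every `j`, and total mass `Σ_j v_j ≤ 1`. -/
theorem exists_localized_weight_vectors {d : ℕ}
    (φ : Matrix (Fin d) (Fin d) ℝ) (hsymm : φ.IsSymm)
    (hnn : ∀ i j, 0 ≤ φ i j) (hdiag : ∀ i, φ i i = 0)
    (φ₀ : ℝ) (hφ₀ : 0 < φ₀) (hφ₀' : φ₀ < 1)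
    (hrow : ∀ i, ∑ j, φ i j ≤ 1 - φ₀) :
    ∀ i : Fin d, ∃ v : Fin d → ℝ,
      (∀ j, 0 ≤ v j) ∧ φ₀ ≤ v i ∧
      (∀ j, ∑ l ∈ Finset.univ.erase j, φ j l * v l ≤ v j) ∧
      ∑ j, v j ≤ 1 := by
  intro i
  -- entries of powers are nonnegative
  have hpow_nn : ∀ n : ℕ, ∀ j l, 0 ≤ (φ ^ n) j l := by
    intro n
    induction n with
    | zero =>
      intro j l
      simp [Matrix.one_apply]
      positivity
    | succ n ih =>
      intro j l
      rw [pow_succ, Matrix.mul_apply]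
      exact Finset.sum_nonneg fun k _ => mul_nonneg (ih j k) (hnn k l)
  -- row sums of powers are at most (1-φ₀)^n
  have hrowpow : ∀ n : ℕ, ∀ j, ∑ l, (φ ^ n) j l ≤ (1 - φ₀) ^ n := by
    intro n
    induction n with
    | zero => intro j; simp [Matrix.one_apply]
    | succ n ih =>
      intro j
      have : ∑ l, (φ ^ (n+1)) j l = ∑ k, (φ ^ n) j k * ∑ l, φ k l := by
        simp only [pow_succ, Matrix.mul_apply, Finset.mul_sum]
        rw [Finset.sum_comm]
      rw [this, pow_succ]
      calc ∑ k, (φ ^ n) j k * ∑ l, φ k l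
          ≤ ∑ k, (φ ^ n) j k * (1 - φ₀) :=
            Finset.sum_le_sum fun k _ => mul_le_mul_of_nonneg_left (hrow k) (hpow_nn n j k)
        _ = (∑ k, (φ ^ n) j k) * (1 - φ₀) := by rw [Finset.sum_mul]
        _ ≤ (1 - φ₀) ^ n * (1 - φ₀) :=
            mul_le_mul_of_nonneg_right (ih j) (by linarith)
  have hentry : ∀ n : ℕ, ∀ j l, (φ ^ n) j l ≤ (1 - φ₀) ^ n := by
    intro n j l
    calc (φ ^ n) j l ≤ ∑ l', (φ ^ n) j l' :=
          Finset.single_le_sum (fun k _ => hpow_nn n j k) (Finset.mem_univ l)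
      _ ≤ (1 - φ₀) ^ n := hrowpow n j
  have hsumgeo : Summable (fun n : ℕ => (1 - φ₀) ^ n) :=
    summable_geometric_of_lt_one (by linarith) (by linarith)
  have hs : ∀ j l, Summable (fun n : ℕ => (φ ^ n) j l) := fun j l =>
    Summable.of_nonneg_of_le (fun n => hpow_nn n j l) (fun n => hentry n j l) hsumgeo
  set v : Fin d → ℝ := fun j => φ₀ * ∑' n : ℕ, (φ ^ n) j i with hv
  have hvnn : ∀ j, 0 ≤ v j := fun j =>
    mul_nonneg hφ₀.le (tsum_nonneg fun n => hpow_nn n j i)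
  refine ⟨v, hvnn, ?_, ?_, ?_⟩
  · -- v i ≥ φ₀
    have h0 : (φ ^ 0) i i = 1 := by simp
    have : (1 : ℝ) ≤ ∑' n : ℕ, (φ ^ n) i i := by
      have := Summable.le_tsum (hs i i) 0 (fun n _ => hpow_nn n i i)
      rw [h0] at this; exact this
    calc φ₀ = φ₀ * 1 := by ring
      _ ≤ v i := mul_le_mul_of_nonneg_left this hφ₀.le
  · -- property (2)
    intro j
    have herase : ∑ l ∈ Finset.univ.erase j, φ j l * v l = ∑ l, φ j l * v l := by
      apply Finset.sum_erase
      simp [hdiag j]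
    rw [herase]
    have hswap : ∑ l, φ j l * v l = φ₀ * ∑' n : ℕ, (φ ^ (n+1)) j i := by
      have : ∀ l, φ j l * v l = φ₀ * ∑' n : ℕ, φ j l * (φ ^ n) l i := by
        intro l
        rw [tsum_mul_left]
        simp only [hv]
        ring
      simp only [this]
      rw [← Finset.mul_sum]
      congr 1
      rw [← Summable.tsum_finsetSum (fun l _ => Summable.mul_left _ (hs l i))]
      congr 1; ext n
      rw [pow_succ', Matrix.mul_apply]
    rw [hswap]
    have htail : ∑' n : ℕ, (φ ^ (n+1)) j i ≤ ∑' n : ℕ, (φ ^ n) j i := by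
      have h := Summable.tsum_eq_zero_add (hs j i)
      have h00 : 0 ≤ (φ ^ 0) j i := hpow_nn 0 j i
      linarith [h]
    exact mul_le_mul_of_nonneg_left htail hφ₀.le
  · -- total mass ≤ 1
    have hcolsum : ∀ n : ℕ, ∑ j, (φ ^ n) j i ≤ (1 - φ₀) ^ n := by
      intro n
      have hsym : ∀ j, (φ ^ n) j i = (φ ^ n) i j := by
        intro j
        have : (φ ^ n)ᵀ = φ ^ n := by
          rw [Matrix.transpose_pow, hsymm]
        calc (φ ^ n) j i = (φ ^ n)ᵀ i j := rfl
          _ = (φ ^ n) i j := by rw [this]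
      calc ∑ j, (φ ^ n) j i = ∑ j, (φ ^ n) i j := by
            exact Finset.sum_congr rfl fun j _ => hsym j
        _ ≤ (1 - φ₀) ^ n := hrowpow n i
    have : ∑ j, v j = φ₀ * ∑' n : ℕ, ∑ j, (φ ^ n) j i := by
      rw [hv, ← Finset.mul_sum]
      congr 1
      rw [← Summable.tsum_finsetSum (fun j _ => hs j i)]
    rw [this]
    have hsum2 : Summable (fun n : ℕ => ∑ j, (φ ^ n) j i) :=
      Summable.of_nonneg_of_le
        (fun n => Finset.sum_nonneg fun j _ => hpow_nn n j i)
        (fun n => hcolsum n) hsumgeo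
    calc φ₀ * ∑' n : ℕ, ∑ j, (φ ^ n) j i
        ≤ φ₀ * ∑' n : ℕ, (1 - φ₀) ^ n :=
          mul_le_mul_of_nonneg_left (Summable.tsum_le_tsum hcolsum hsum2 hsumgeo) hφ₀.le
      _ = φ₀ * (1 - (1 - φ₀))⁻¹ := by
          rw [tsum_geometric_of_lt_one (by linarith) (by linarith)]
      _ = 1 := by rw [sub_sub_cancel, mul_inv_cancel₀ hφ₀.ne']
end
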